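/- arXiv:1403.0846 — 7 statements merged into one kernel-verified Lean document; each statement's English description precedes it below -/
import Mathlib

section
/- Let g ≥ 2, ν ≥ 1 and let c = (c₁,…,c_r) be a composition of ν (a finite sequence of positive integers with c₁+…+c_r = ν). Then there exists a tuple (x₁,…,x_g,y₁,…,y_g) of endomorphisms of ℂ^ν such that: (a) Σ_{i=1}^g (x_i y_i − y_i x_i) = 0; (b) the canonical flag (W_k) of (x_i,y_i) satisfies W_r = 0 and dim(W_{k−1}/W_k) = c_k for 1 ≤ k ≤ r; and (c) for every 1 ≤ k ≤ r−1, the only linear map ξ : W_k/W_{k+1} → W_{k−1}/W_k satisfying y_i^{(k)} ∘ ξ = ξ ∘ y_i^{(k+1)} for all 1 ≤ i ≤ g is ξ = 0, where y_i^{(k)} denotes the endomorphism induced by y_i on the quotient W_{k−1}/W_k. (This says the stratum Λ(c)₀ of the seminilpotent variety for the quiver with one vertex and g loops is nonempty.) -/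
/-- The canonical flag of a tuple `(x₁,…,x_g,y₁,…,y_g)` of endomorphisms of `ℂ^ν`:
`W 0 = ℂ^ν` and `W (k+1)` is the smallest subspace containing all `xᵢ(W k)` and
invariant under all the `xᵢ` and all the `yᵢ`. -/
noncomputable def canonicalFlag {g ν : ℕ} (x y : Fin g → Module.End ℂ (Fin ν → ℂ)) :
    ℕ → Submodule ℂ (Fin ν → ℂ)
  | 0 => ⊤
  | (k + 1) => sInf {S : Submodule ℂ (Fin ν → ℂ) |
      (∀ i, (canonicalFlag x y k).map (x i : (Fin ν → ℂ) →ₗ[ℂ] (Fin ν → ℂ)) ≤ S) ∧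
      (∀ i, S.map (x i : (Fin ν → ℂ) →ₗ[ℂ] (Fin ν → ℂ)) ≤ S) ∧
      (∀ i, S.map (y i : (Fin ν → ℂ) →ₗ[ℂ] (Fin ν → ℂ)) ≤ S)}


namespace SemiNilAux

open Module

noncomputable def shiftMap (ν : ℕ) (w : ℕ → ℂ) : Module.End ℂ (Fin ν → ℂ) where
  toFun v := fun p => if h : 0 < p.val then
      w (p.val - 1) * v ⟨p.val - 1, lt_of_le_of_lt (Nat.sub_le _ _) p.isLt⟩ else 0
  map_add' u v := by
    funext p; by_cases h : 0 < p.val <;> simp [h, mul_add]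
  map_smul' a v := by
    funext p; by_cases h : 0 < p.val <;> simp [h, mul_left_comm]

noncomputable def diagMap (ν : ℕ) (d : ℕ → ℂ) : Module.End ℂ (Fin ν → ℂ) where
  toFun v := fun p => d p.val * v p
  map_add' u v := by funext p; simp [mul_add]
  map_smul' a v := by funext p; simp [mul_left_comm]

lemma shiftMap_apply (ν : ℕ) (w : ℕ → ℂ) (v : Fin ν → ℂ) (p : Fin ν) :
    shiftMap ν w v p = if h : 0 < p.val then
      w (p.val - 1) * v ⟨p.val - 1, lt_of_le_of_lt (Nat.sub_le _ _) p.isLt⟩ else 0 := rfl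

lemma diagMap_apply (ν : ℕ) (d : ℕ → ℂ) (v : Fin ν → ℂ) (p : Fin ν) :
    diagMap ν d v p = d p.val * v p := rfl

/-- double shift formula -/
lemma shift_shift_apply (ν : ℕ) (a b : ℕ → ℂ) (v : Fin ν → ℂ) (p : Fin ν) :
    shiftMap ν a (shiftMap ν b v) p =
      if h : 2 ≤ p.val then
        a (p.val - 1) * (b (p.val - 2) *
          v ⟨p.val - 2, lt_of_le_of_lt (Nat.sub_le _ _) p.isLt⟩)
      else 0 := by
  rcases p with ⟨pv, hp⟩
  rw [shiftMap_apply]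
  by_cases h1 : 0 < pv
  · rw [dif_pos h1, shiftMap_apply]
    by_cases h2 : 0 < pv - 1
    · rw [dif_pos h2, dif_pos (by omega : 2 ≤ pv)]
      have : pv - 1 - 1 = pv - 2 := by omega
      congr 1
    · rw [dif_neg h2, dif_neg (by omega : ¬ 2 ≤ pv), mul_zero]
  · rw [dif_neg h1, dif_neg (by omega : ¬ 2 ≤ pv)]

/-- commutator of a double shift with the coordinate diagonal -/
lemma diag_comm (ν : ℕ) (a b : ℕ → ℂ) :
    diagMap ν (fun n => (n : ℂ)) * (shiftMap ν a * shiftMap ν b)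
      - (shiftMap ν a * shiftMap ν b) * diagMap ν (fun n => (n : ℂ))
      = (2 : ℂ) • (shiftMap ν a * shiftMap ν b) := by
  apply LinearMap.ext; intro v; funext p
  simp only [LinearMap.sub_apply, Module.End.mul_apply, LinearMap.smul_apply,
    Pi.sub_apply, Pi.smul_apply, smul_eq_mul]
  rw [diagMap_apply, shift_shift_apply, shift_shift_apply]
  by_cases h : 2 ≤ p.val
  · rw [dif_pos h, dif_pos h, diagMap_apply]
    have hc : ((p.val - 2 : ℕ) : ℂ) = (p.val : ℂ) - 2 := by
      push_cast [Nat.cast_sub (by omega : 2 ≤ p.val)]; ring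
    dsimp only
    rw [hc]; ring
  · rw [dif_neg h, dif_neg h]; ring

/-- coordinate subspace: vectors vanishing in coordinates `< t`. -/
noncomputable def U (ν t : ℕ) : Submodule ℂ (Fin ν → ℂ) where
  carrier := {v | ∀ p : Fin ν, p.val < t → v p = 0}
  zero_mem' := by intro p _; rfl
  add_mem' := by intro u v hu hv p hp; simp [hu p hp, hv p hp]
  smul_mem' := by intro a v hv p hp; simp [hv p hp]

lemma mem_U {ν t : ℕ} {v : Fin ν → ℂ} : v ∈ U ν t ↔ ∀ p : Fin ν, p.val < t → v p = 0 :=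
  Iff.rfl

lemma U_mono {ν : ℕ} {s t : ℕ} (h : s ≤ t) : U ν t ≤ U ν s :=
  fun v hv p hp => hv p (lt_of_lt_of_le hp h)

lemma U_zero (ν : ℕ) : U ν 0 = ⊤ := by
  ext v; simp [mem_U]

lemma U_bot (ν : ℕ) {t : ℕ} (h : ν ≤ t) : U ν t = ⊥ := by
  ext v; simp only [mem_U, Submodule.mem_bot]
  constructor
  · intro hv; funext p; exact hv p (lt_of_lt_of_le p.isLt h)
  · rintro rfl p _; rfl

def m (c : List ℕ) (k : ℕ) : ℕ := (c.take k).sum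

lemma m_zero (c : List ℕ) : m c 0 = 0 := rfl

lemma m_mono (c : List ℕ) {k l : ℕ} (hkl : k ≤ l) : m c k ≤ m c l := by
  unfold m
  obtain ⟨t, ht⟩ := (List.take_prefix_take_left hkl : c.take k <+: c.take l)
  calc (c.take k).sum ≤ (c.take k).sum + t.sum := Nat.le_add_right _ _
    _ = (c.take l).sum := by rw [← List.sum_append, ht]

lemma m_succ (c : List ℕ) (k : ℕ) (hk : k < c.length) :
    m c (k+1) = m c k + c.get ⟨k, hk⟩ := by
  unfold m
  rw [List.take_succ, List.sum_append]
  simp [List.getElem?_eq_getElem hk]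

lemma m_length (c : List ℕ) : m c c.length = c.sum := by
  unfold m; rw [List.take_length]

lemma m_le_sum (c : List ℕ) (k : ℕ) : m c k ≤ c.sum := by
  rcases le_or_gt k c.length with h | h
  · calc m c k ≤ m c c.length := m_mono c h
      _ = c.sum := m_length c
  · unfold m; rw [List.take_of_length_le h.le]

lemma m_strict (c : List ℕ) (hpos : ∀ a ∈ c, 0 < a) {k : ℕ} (hk : k < c.length) :
    m c k < m c (k+1) := by
  rw [m_succ c k hk]
  have := hpos (c.get ⟨k, hk⟩) (c.get_mem _)
  omega

lemma m_eq_of_ge (c : List ℕ) (k : ℕ) (hk : c.length ≤ k) : m c k = c.sum := by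
  unfold m; rw [List.take_of_length_le hk]


section Ops
variable (c : List ℕ)

/-- block-end predicate: `j+1` is a partial sum. -/
def P (j : ℕ) : Prop := ∃ l, m c l = j + 1

open Classical in
noncomputable def w1 (j : ℕ) : ℂ := if P c j then 1 else 0

noncomputable def w2 (j : ℕ) : ℂ := 1 - w1 c j

lemma w1_eq_zero {j : ℕ} (h : ¬ P c j) : w1 c j = 0 := by
  unfold w1; rw [if_neg h]

lemma w1_eq_one {j : ℕ} (h : P c j) : w1 c j = 1 := by
  unfold w1; rw [if_pos h]

lemma w2_eq_one {j : ℕ} (h : ¬ P c j) : w2 c j = 1 := by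
  unfold w2; rw [w1_eq_zero c h]; ring

lemma w2_eq_zero {j : ℕ} (h : P c j) : w2 c j = 0 := by
  unfold w2; rw [w1_eq_one c h]; ring

variable (ν : ℕ)

noncomputable def X1 : Module.End ℂ (Fin ν → ℂ) := shiftMap ν (w1 c)
noncomputable def Y1 : Module.End ℂ (Fin ν → ℂ) := shiftMap ν (w2 c)
noncomputable def Dg : Module.End ℂ (Fin ν → ℂ) := diagMap ν (fun n => (n : ℂ))
noncomputable def X2 : Module.End ℂ (Fin ν → ℂ) :=
  (2:ℂ)⁻¹ • (X1 c ν * Y1 c ν - Y1 c ν * X1 c ν)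

variable (g : ℕ)

noncomputable def xv : Fin g → Module.End ℂ (Fin ν → ℂ) := fun i =>
  if i.val = 0 then X1 c ν else if i.val = 1 then X2 c ν else 0

noncomputable def yv : Fin g → Module.End ℂ (Fin ν → ℂ) := fun i =>
  if i.val = 0 then Y1 c ν else if i.val = 1 then Dg ν else 0

/-- moment map condition -/
lemma moment_map (hg : 2 ≤ g) :
    (∑ i : Fin g, (xv c ν g i * yv c ν g i - yv c ν g i * xv c ν g i)) = 0 := by
  classical
  have h01 : ({⟨0, by omega⟩, ⟨1, by omega⟩} : Finset (Fin g)) ⊆ Finset.univ := by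
    intro i _; exact Finset.mem_univ i
  have hzero : ∀ i ∈ Finset.univ, i ∉ ({⟨0, by omega⟩, ⟨1, by omega⟩} : Finset (Fin g)) →
      (xv c ν g i * yv c ν g i - yv c ν g i * xv c ν g i) = 0 := by
    intro i _ hi
    simp only [Finset.mem_insert, Finset.mem_singleton] at hi
    push_neg at hi
    have h0 : i.val ≠ 0 := fun h => hi.1 (Fin.ext h)
    have h1 : i.val ≠ 1 := fun h => hi.2 (Fin.ext h)
    simp [xv, yv, h0, h1]
  rw [← Finset.sum_subset h01 hzero]
  rw [Finset.sum_pair (by simp [Fin.ext_iff] : (⟨0, by omega⟩ : Fin g) ≠ ⟨1, by omega⟩)]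
  simp only [xv, yv]
  norm_num
  -- now : (X1*Y1 - Y1*X1) + (X2*D - D*X2) = 0
  have key := diag_comm ν (w1 c) (w2 c)
  have key2 := diag_comm ν (w2 c) (w1 c)
  unfold X2 X1 Y1 Dg at *
  set A := shiftMap ν (w1 c)
  set B := shiftMap ν (w2 c)
  set D := diagMap ν (fun n => (n:ℂ))
  have k1 : D * (A * B) = (2:ℂ) • (A * B) + A * B * D := by rw [← key]; abel
  have k2 : D * (B * A) = (2:ℂ) • (B * A) + B * A * D := by rw [← key2]; abel
  rw [smul_mul_assoc, mul_smul_comm, mul_sub, sub_mul, k1, k2, smul_sub, smul_sub,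
    smul_add, smul_add, smul_smul]
  module


lemma le_of_P {j k : ℕ} (h : P c j) (h2 : m c k < j + 1) : m c (k+1) ≤ j + 1 := by
  obtain ⟨l, hl⟩ := h
  rcases le_or_gt l k with hlk | hlk
  · exact absurd (hl ▸ m_mono c hlk) (by omega)
  · exact hl ▸ m_mono c (by omega)

lemma shift_maps_U (w : ℕ → ℂ) {t : ℕ} {v : Fin ν → ℂ} (hv : v ∈ U ν t) :
    shiftMap ν w v ∈ U ν (t+1) := by
  intro p hp
  rw [shiftMap_apply]
  by_cases h : 0 < p.val
  · rw [dif_pos h, hv _ (by simp; omega), mul_zero]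
  · rw [dif_neg h]

lemma shift_mem_U (w : ℕ → ℂ) {t : ℕ} {v : Fin ν → ℂ} (hv : v ∈ U ν t) :
    shiftMap ν w v ∈ U ν t :=
  U_mono (Nat.le_succ t) (shift_maps_U ν w hv)

lemma diag_mem_U (d : ℕ → ℂ) {t : ℕ} {v : Fin ν → ℂ} (hv : v ∈ U ν t) :
    diagMap ν d v ∈ U ν t := by
  intro p hp
  rw [diagMap_apply, hv p hp, mul_zero]

lemma X1_maps {k : ℕ} {v : Fin ν → ℂ} (hv : v ∈ U ν (m c k)) :
    X1 c ν v ∈ U ν (m c (k+1)) := by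
  intro p hp
  rw [X1, shiftMap_apply]
  by_cases h : 0 < p.val
  · rw [dif_pos h]
    by_cases h2 : m c k < p.val
    · rw [w1_eq_zero, zero_mul]
      intro hP
      have := le_of_P c hP (by omega : m c k < (p.val - 1) + 1)
      omega
    · rw [hv _ (by simp; omega), mul_zero]
  · rw [dif_neg h]

lemma X1Y1_maps {k : ℕ} {v : Fin ν → ℂ} (hv : v ∈ U ν (m c k)) :
    X1 c ν (Y1 c ν v) ∈ U ν (m c (k+1)) := by
  intro p hp
  rw [X1, Y1, shift_shift_apply]
  by_cases h : 2 ≤ p.val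
  · rw [dif_pos h]
    by_cases h2 : m c k + 1 < p.val
    · rw [w1_eq_zero, zero_mul]
      intro hP
      have := le_of_P c hP (by omega : m c k < (p.val - 1) + 1)
      omega
    · rw [hv _ (by simp; omega), mul_zero, mul_zero]
  · rw [dif_neg h]

lemma Y1X1_maps {k : ℕ} {v : Fin ν → ℂ} (hv : v ∈ U ν (m c k)) :
    Y1 c ν (X1 c ν v) ∈ U ν (m c (k+1)) := by
  intro p hp
  rw [X1, Y1, shift_shift_apply]
  by_cases h : 2 ≤ p.val
  · rw [dif_pos h]
    by_cases h2 : m c k + 1 < p.val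
    · rw [w1_eq_zero c (j := p.val - 2), zero_mul, mul_zero]
      intro hP
      have := le_of_P c hP (by omega : m c k < (p.val - 2) + 1)
      omega
    · rw [hv _ (by simp; omega), mul_zero, mul_zero]
  · rw [dif_neg h]

lemma X2_maps {k : ℕ} {v : Fin ν → ℂ} (hv : v ∈ U ν (m c k)) :
    X2 c ν v ∈ U ν (m c (k+1)) := by
  rw [X2]
  simp only [LinearMap.smul_apply, LinearMap.sub_apply, Module.End.mul_apply]
  exact Submodule.smul_mem _ _ (Submodule.sub_mem _ (X1Y1_maps c ν hv) (Y1X1_maps c ν hv))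

lemma X2_mem_U {t : ℕ} {v : Fin ν → ℂ} (hv : v ∈ U ν t) :
    X2 c ν v ∈ U ν t := by
  rw [X2]
  simp only [LinearMap.smul_apply, LinearMap.sub_apply, Module.End.mul_apply]
  refine Submodule.smul_mem _ _ (Submodule.sub_mem _ ?_ ?_)
  · exact shift_mem_U ν _ (shift_mem_U ν _ hv)
  · exact shift_mem_U ν _ (shift_mem_U ν _ hv)


end Ops

section Gen
variable (ν : ℕ)

/-- standard basis vector -/
noncomputable def e (i : Fin ν) : Fin ν → ℂ := fun j => if i = j then 1 else 0

lemma e_mem_U {t : ℕ} {j : Fin ν} (h : t ≤ j.val) : e ν j ∈ U ν t := by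
  intro p hp
  unfold e
  rw [if_neg]
  intro hpj
  rw [← hpj] at hp
  omega

lemma U_le_span {t : ℕ} {S : Submodule ℂ (Fin ν → ℂ)}
    (h : ∀ j : Fin ν, t ≤ j.val → e ν j ∈ S) : U ν t ≤ S := by
  intro v hv
  rw [pi_eq_sum_univ v]
  refine Submodule.sum_mem _ (fun j _ => ?_)
  by_cases hj : j.val < t
  · rw [hv j hj, zero_smul]; exact S.zero_mem
  · exact S.smul_mem _ (h j (by omega))

lemma shift_single (w : ℕ → ℂ) {j : ℕ} (h1 : 1 ≤ j) (h2 : j < ν) :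
    shiftMap ν w (e ν ⟨j-1, by omega⟩) = w (j-1) • e ν ⟨j, h2⟩ := by
  funext p
  rw [shiftMap_apply]
  unfold e
  by_cases h : 0 < p.val
  · rw [dif_pos h]
    by_cases hpj : p.val = j
    · rw [if_pos (by simp [Fin.ext_iff]; omega)]
      simp only [Pi.smul_apply, smul_eq_mul]
      rw [if_pos (by simp [Fin.ext_iff]; omega)]
      rw [hpj]
    · rw [if_neg (by simp [Fin.ext_iff]; omega)]
      simp only [Pi.smul_apply, smul_eq_mul, mul_zero]
      rw [if_neg (by simp [Fin.ext_iff]; omega), mul_zero]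
  · rw [dif_neg h]
    simp only [Pi.smul_apply, smul_eq_mul]
    rw [if_neg (by simp [Fin.ext_iff]; omega), mul_zero]

variable (c : List ℕ)

lemma singles_mem {k : ℕ} (hpos : ∀ a ∈ c, 0 < a) (hk : k + 1 ≤ c.length)
    (S : Submodule ℂ (Fin ν → ℂ))
    (hx : (U ν (m c k)).map (X1 c ν : (Fin ν → ℂ) →ₗ[ℂ] (Fin ν → ℂ)) ≤ S)
    (hy : S.map (Y1 c ν : (Fin ν → ℂ) →ₗ[ℂ] (Fin ν → ℂ)) ≤ S) :
    ∀ j : ℕ, m c (k+1) ≤ j → (hjν : j < ν) → e ν ⟨j, hjν⟩ ∈ S := by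
  intro j
  induction j using Nat.strong_induction_on with
  | _ j IH =>
  intro hj hjν
  have hmk : m c k < m c (k+1) := m_strict c hpos (by omega)
  have hj1 : 1 ≤ j := by omega
  by_cases hP : P c (j - 1)
  · -- j is a block start: use X1
    have h1 : e ν ⟨j-1, by omega⟩ ∈ U ν (m c k) := e_mem_U ν (by simp; omega)
    have h2 : X1 c ν (e ν ⟨j-1, by omega⟩) = e ν ⟨j, hjν⟩ := by
      rw [X1, shift_single ν _ hj1 hjν, w1_eq_one c hP, one_smul]
    exact hx ⟨_, h1, h2⟩
  · -- use Y1 from the previous vector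
    have hjne : j ≠ m c (k+1) := by
      intro hje
      exact hP ⟨k+1, by omega⟩
    have h0 : e ν ⟨j-1, by omega⟩ ∈ S := IH (j-1) (by omega) (by omega) (by omega)
    have h2 : Y1 c ν (e ν ⟨j-1, by omega⟩) = e ν ⟨j, hjν⟩ := by
      rw [Y1, shift_single ν _ hj1 hjν, w2_eq_one c hP, one_smul]
    exact hy ⟨_, h0, h2⟩

end Gen

lemma finrank_U {ν t : ℕ} (h : t ≤ ν) : Module.finrank ℂ (U ν t) = ν - t := by
  have hker : U ν t = LinearMap.ker (LinearMap.funLeft ℂ ℂ (Fin.castLE h)) := by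
    ext v
    simp only [LinearMap.mem_ker, mem_U]
    constructor
    · intro hv
      funext q
      exact hv (Fin.castLE h q) q.isLt
    · intro hv p hp
      have := congrFun hv ⟨p.val, hp⟩
      simpa [LinearMap.funLeft_apply, Fin.castLE] using this
  rw [hker]
  have hsurj : Function.Surjective (LinearMap.funLeft ℂ ℂ (Fin.castLE h)) :=
    LinearMap.funLeft_surjective_of_injective ℂ ℂ _ (Fin.castLE_injective h)
  have hrn := LinearMap.finrank_range_add_finrank_ker (LinearMap.funLeft ℂ ℂ (Fin.castLE h))
  rw [LinearMap.range_eq_top.mpr hsurj, finrank_top] at hrn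
  simp only [Module.finrank_pi, Fintype.card_fin] at hrn
  omega

lemma finrank_quot {ν t t' : ℕ} (h1 : t ≤ t') (h2 : t' ≤ ν) :
    Module.finrank ℂ (↥(U ν t) ⧸ (U ν t').comap (U ν t).subtype) = t' - t := by
  have hle : U ν t' ≤ U ν t := U_mono h1
  have e1 : Module.finrank ℂ ((U ν t').comap (U ν t).subtype) = ν - t' := by
    rw [← finrank_U h2]
    exact LinearEquiv.finrank_eq (Submodule.comapSubtypeEquivOfLe hle)
  have hq := Submodule.finrank_quotient_add_finrank ((U ν t').comap (U ν t).subtype)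
  rw [e1, finrank_U (le_trans h1 h2)] at hq
  omega

end SemiNilAux

namespace SemiNilAux

theorem flag_eq {g ν : ℕ} (c : List ℕ) (hg : 2 ≤ g) (hpos : ∀ a ∈ c, 0 < a) :
    ∀ k, k ≤ c.length →
      canonicalFlag (xv c ν g) (yv c ν g) k = U ν (m c k) := by
  intro k
  induction k with
  | zero =>
    intro _
    rw [canonicalFlag, m_zero, U_zero]
  | succ k IH =>
    intro hk
    have IHk := IH (by omega)
    rw [canonicalFlag, IHk]
    apply le_antisymm
    · apply sInf_le
      refine ⟨?_, ?_, ?_⟩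
      · intro i
        rintro u ⟨v, hv, rfl⟩
        by_cases hi0 : i.val = 0
        · have hxi : xv c ν g i = X1 c ν := by simp [xv, hi0]
          rw [hxi]
          exact X1_maps c ν hv
        by_cases hi1 : i.val = 1
        · have hxi : xv c ν g i = X2 c ν := by simp [xv, hi0, hi1]
          rw [hxi]
          exact X2_maps c ν hv
        · have hxi : xv c ν g i = 0 := by simp [xv, hi0, hi1]
          rw [hxi]
          simp only [LinearMap.zero_apply]
          exact Submodule.zero_mem _
      · intro i
        rintro u ⟨v, hv, rfl⟩
        by_cases hi0 : i.val = 0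
        · have hxi : xv c ν g i = X1 c ν := by simp [xv, hi0]
          rw [hxi]
          exact shift_mem_U ν _ hv
        by_cases hi1 : i.val = 1
        · have hxi : xv c ν g i = X2 c ν := by simp [xv, hi0, hi1]
          rw [hxi]
          exact X2_mem_U c ν hv
        · have hxi : xv c ν g i = 0 := by simp [xv, hi0, hi1]
          rw [hxi]
          simp only [LinearMap.zero_apply]
          exact Submodule.zero_mem _
      · intro i
        rintro u ⟨v, hv, rfl⟩
        by_cases hi0 : i.val = 0
        · have hyi : yv c ν g i = Y1 c ν := by simp [yv, hi0]
          rw [hyi]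
          exact shift_mem_U ν _ hv
        by_cases hi1 : i.val = 1
        · have hyi : yv c ν g i = Dg ν := by simp [yv, hi0, hi1]
          rw [hyi]
          exact diag_mem_U ν _ hv
        · have hyi : yv c ν g i = 0 := by simp [yv, hi0, hi1]
          rw [hyi]
          simp only [LinearMap.zero_apply]
          exact Submodule.zero_mem _
    · apply le_sInf
      rintro S ⟨h1, h2, h3⟩
      have hx := h1 ⟨0, by omega⟩
      have hy := h3 ⟨0, by omega⟩
      have hxi : xv c ν g ⟨0, by omega⟩ = X1 c ν := by simp [xv]
      have hyi : yv c ν g ⟨0, by omega⟩ = Y1 c ν := by simp [yv]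
      rw [hxi] at hx
      rw [hyi] at hy
      apply U_le_span
      intro j hj
      have := singles_mem ν c hpos hk S hx hy j.val hj j.isLt
      simpa using this

end SemiNilAux

namespace SemiNilAux

lemma Dg_single {ν : ℕ} (j : Fin ν) : Dg ν (e ν j) = ((j.val : ℕ) : ℂ) • e ν j := by
  funext q
  rw [Dg, diagMap_apply]
  unfold e
  simp only [Pi.smul_apply, smul_eq_mul]
  by_cases h : j = q
  · rw [h]
  · rw [if_neg h, mul_zero, mul_zero]

lemma xi_single {ν t : ℕ} (ξ : (Fin ν → ℂ) →ₗ[ℂ] (Fin ν → ℂ)) {j : Fin ν} (hj : t ≤ j.val)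
    (hcom : Dg ν (ξ (e ν j)) - ξ (Dg ν (e ν j)) ∈ U ν t) : ξ (e ν j) ∈ U ν t := by
  intro p hp
  rw [Dg_single, map_smul] at hcom
  have h2 := hcom p hp
  simp only [Pi.sub_apply, Pi.smul_apply, smul_eq_mul] at h2
  rw [Dg, diagMap_apply] at h2
  have h3 : ((p.val : ℂ) - (j.val : ℂ)) * ξ (e ν j) p = 0 := by linear_combination h2
  rcases mul_eq_zero.mp h3 with h4 | h4
  · exfalso
    have : (p.val : ℂ) = (j.val : ℂ) := by linear_combination h4
    have := Nat.cast_injective (R := ℂ) this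
    omega
  · exact h4

end SemiNilAux

open SemiNilAux

/-- nonemptiness of the stratum `Λ(c)₀`.  Condition (c), about maps
`ξ : W_k/W_{k+1} → W_{k−1}/W_k` intertwining the induced endomorphisms `yᵢ⁽ᵏ⁺¹⁾`, `yᵢ⁽ᵏ⁾`,
is expressed equivalently through ambient linear maps `ξ : ℂ^ν → ℂ^ν` with
`ξ(W_k) ⊆ W_{k−1}`, `ξ(W_{k+1}) ⊆ W_k` and `yᵢ ∘ ξ − ξ ∘ yᵢ ≡ 0 (mod W_k)` on `W_k`:
its vanishing on the quotient means `ξ(W_k) ⊆ W_k`. -/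
theorem lambda_c_zero_nonempty
    (g ν : ℕ) (hg : 2 ≤ g) (hν : 1 ≤ ν) (c : List ℕ)
    (hpos : ∀ a ∈ c, 0 < a) (hsum : c.sum = ν) :
    ∃ x y : Fin g → Module.End ℂ (Fin ν → ℂ),
      -- (a) the moment map condition Σ [xᵢ, yᵢ] = 0
      (∑ i, (x i * y i - y i * x i) = 0) ∧
      -- (b) the canonical flag has dimension vector c
      canonicalFlag x y c.length = ⊥ ∧
      (∀ k : Fin c.length,
        Module.finrank ℂ
          (↥(canonicalFlag x y (k : ℕ)) ⧸
            (canonicalFlag x y ((k : ℕ) + 1)).comap (canonicalFlag x y (k : ℕ)).subtype)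
          = c.get k) ∧
      -- (c) for 1 ≤ k ≤ r−1, the only intertwiner W_k/W_{k+1} → W_{k−1}/W_k is 0
      (∀ k : ℕ, 1 ≤ k → k ≤ c.length - 1 →
        ∀ ξ : (Fin ν → ℂ) →ₗ[ℂ] (Fin ν → ℂ),
          (canonicalFlag x y k).map ξ ≤ canonicalFlag x y (k - 1) →
          (canonicalFlag x y (k + 1)).map ξ ≤ canonicalFlag x y k →
          (∀ i, ∀ v ∈ canonicalFlag x y k, y i (ξ v) - ξ (y i v) ∈ canonicalFlag x y k) →
          (canonicalFlag x y k).map ξ ≤ canonicalFlag x y k) := by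
  subst hsum
  refine ⟨xv c c.sum g, yv c c.sum g, moment_map c c.sum g hg, ?_, ?_, ?_⟩
  · rw [flag_eq c hg hpos c.length le_rfl, m_length, U_bot _ le_rfl]
  · intro k
    rw [flag_eq c hg hpos _ (le_of_lt k.isLt), flag_eq c hg hpos _ k.isLt,
      finrank_quot (m_mono c (Nat.le_succ _)) (m_le_sum c _), m_succ c k.val k.isLt]
    simp only [Fin.eta]
    omega
  · intro k hk1 hk2 ξ h1 h2 hcom
    have hkle : k ≤ c.length := by omega
    rw [flag_eq c hg hpos k hkle] at hcom ⊢
    rintro u ⟨v, hv, rfl⟩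
    rw [pi_eq_sum_univ v, map_sum]
    refine Submodule.sum_mem _ (fun j _ => ?_)
    rw [map_smul]
    by_cases hj : j.val < m c k
    · rw [hv j hj, zero_smul]
      exact Submodule.zero_mem _
    · show v j • ξ (e c.sum j) ∈ U c.sum (m c k)
      refine Submodule.smul_mem _ _ (xi_single ξ (by omega : m c k ≤ j.val) ?_)
      have hmem : e c.sum j ∈ U c.sum (m c k) := e_mem_U _ (by omega)
      have := hcom ⟨1, by omega⟩ (e c.sum j) hmem
      simpa [yv] using this
end

section
/- Let g ≥ 1 and let W, X be finite-dimensional complex vector spaces. Let x₁,…,x_g, y₁,…,y_g ∈ End(W) and z₁,…,z_g ∈ End(X). Define the linear map φ : Hom(X,W)^g × Hom(X,W)^g → Hom(X,W) by φ(u₁,…,u_g,v₁,…,v_g) = Σ_{i=1}^g (x_i ∘ v_i + u_i ∘ z_i − y_i ∘ u_i). Then dim ker φ = (2g−1)·(dim W)·(dim X) + δ, where δ = dim { ξ ∈ Hom(W,X) : ξ ∘ x_i = 0 and z_i ∘ ξ = ξ ∘ y_i for all 1 ≤ i ≤ g }. -/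
open LinearMap Module

section Aux

variable (W X : Type) [AddCommGroup W] [Module ℂ W] [FiniteDimensional ℂ W]
  [AddCommGroup X] [Module ℂ X] [FiniteDimensional ℂ X]

set_option linter.unusedSectionVars false

/-- The trace pairing `Hom(X,W) → Dual(Hom(W,X))`, `f ↦ (ξ ↦ tr (f ∘ ξ))`. -/
noncomputable def traceT : (X →ₗ[ℂ] W) →ₗ[ℂ] Module.Dual ℂ (W →ₗ[ℂ] X) where
  toFun f := (LinearMap.trace ℂ W) ∘ₗ (LinearMap.llcomp ℂ W X W f)
  map_add' f g := by ext ξ; simp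
  map_smul' c f := by ext ξ; simp

lemma traceT_apply (f : X →ₗ[ℂ] W) (ξ : W →ₗ[ℂ] X) :
    traceT W X f ξ = LinearMap.trace ℂ W (f ∘ₗ ξ) := rfl

lemma trace_smulRight (φ : Module.Dual ℂ W) (v : W) :
    LinearMap.trace ℂ W (φ.smulRight v) = φ v := by
  have h := LinearMap.trace_eq_contract_apply ℂ W (φ ⊗ₜ[ℂ] v)
  have e : (dualTensorHom ℂ W W) (φ ⊗ₜ[ℂ] v) = φ.smulRight v := by
    ext w; simp
  rw [e, contractLeft_apply] at h
  exact h

lemma traceT_injective : Function.Injective (traceT W X) := by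
  rw [← LinearMap.ker_eq_bot, LinearMap.ker_eq_bot']
  intro f hf
  ext v
  simp only [LinearMap.zero_apply]
  rw [← Module.forall_dual_apply_eq_zero_iff ℂ]
  intro φ
  have h0 : traceT W X f (φ.smulRight v) = 0 := by rw [hf]; rfl
  have hcomp : f ∘ₗ φ.smulRight v = φ.smulRight (f v) := by
    ext w; simp
  rw [traceT_apply, hcomp, trace_smulRight] at h0
  exact h0

end Aux

section Aux2

variable (g : ℕ) (W X : Type) [AddCommGroup W] [Module ℂ W] [FiniteDimensional ℂ W]
  [AddCommGroup X] [Module ℂ X] [FiniteDimensional ℂ X]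

set_option linter.unusedSectionVars false

/-- Trace pairing on the product space. -/
noncomputable def traceS :
    ((Fin g → (X →ₗ[ℂ] W)) × (Fin g → (X →ₗ[ℂ] W))) →ₗ[ℂ]
      Module.Dual ℂ ((Fin g → (W →ₗ[ℂ] X)) × (Fin g → (W →ₗ[ℂ] X))) where
  toFun p := (∑ i, (traceT W X (p.1 i)) ∘ₗ (LinearMap.proj i) ∘ₗ (LinearMap.fst ℂ _ _))
    + (∑ i, (traceT W X (p.2 i)) ∘ₗ (LinearMap.proj i) ∘ₗ (LinearMap.snd ℂ _ _))
  map_add' p q := by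
    simp only [Prod.fst_add, Prod.snd_add, Pi.add_apply, map_add, add_comp,
      Finset.sum_add_distrib]
    abel
  map_smul' c p := by
    simp only [Prod.smul_fst, Prod.smul_snd, Pi.smul_apply, map_smul, smul_comp,
      RingHom.id_apply, ← Finset.smul_sum, smul_add]

lemma traceS_apply (p : (Fin g → (X →ₗ[ℂ] W)) × (Fin g → (X →ₗ[ℂ] W)))
    (q : (Fin g → (W →ₗ[ℂ] X)) × (Fin g → (W →ₗ[ℂ] X))) :
    traceS g W X p q = (∑ i, traceT W X (p.1 i) (q.1 i)) + ∑ i, traceT W X (p.2 i) (q.2 i) := by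
  simp [traceS]

lemma traceS_injective : Function.Injective (traceS g W X) := by
  rw [← LinearMap.ker_eq_bot, LinearMap.ker_eq_bot']
  intro p hp
  have key : ∀ q, traceS g W X p q = 0 := fun q => by rw [hp]; rfl
  have h1 : ∀ i ξ, traceT W X (p.1 i) ξ = 0 := by
    intro i ξ
    have := key (Pi.single i ξ, 0)
    classical
    simpa [traceS_apply, Pi.single_apply, apply_ite] using this
  have h2 : ∀ i ξ, traceT W X (p.2 i) ξ = 0 := by
    intro i ξ
    have := key (0, Pi.single i ξ)
    classical
    simpa [traceS_apply, Pi.single_apply, apply_ite] using this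
  have e1 : ∀ i, p.1 i = 0 := fun i =>
    traceT_injective W X (by ext ξ; simp [h1 i ξ])
  have e2 : ∀ i, p.2 i = 0 := fun i =>
    traceT_injective W X (by ext ξ; simp [h2 i ξ])
  ext i <;> simp [e1, e2]

/-- The "adjoint" map ψ. -/
noncomputable def psiMap (x y : Fin g → Module.End ℂ W) (z : Fin g → Module.End ℂ X) :
    (W →ₗ[ℂ] X) →ₗ[ℂ] ((Fin g → (W →ₗ[ℂ] X)) × (Fin g → (W →ₗ[ℂ] X))) where
  toFun ξ := (fun i => (z i) ∘ₗ ξ - ξ ∘ₗ (y i), fun i => ξ ∘ₗ (x i))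
  map_add' ξ η := by
    refine Prod.ext ?_ ?_ <;> funext i <;> simp [comp_add, add_comp] <;> abel
  map_smul' c ξ := by
    refine Prod.ext ?_ ?_ <;> funext i <;> simp [comp_smul, smul_comp, smul_sub]

end Aux2

/-- the kernel of
`φ(u,v) = Σᵢ (xᵢ ∘ vᵢ + uᵢ ∘ zᵢ − yᵢ ∘ uᵢ)` has dimension
`(2g−1)·dim W·dim X + δ`, where `δ` is the dimension of the space of intertwiners
`ξ : W → X` with `ξ ∘ xᵢ = 0` and `zᵢ ∘ ξ = ξ ∘ yᵢ` for all `i`. -/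
theorem finrank_ker_phi
    (g : ℕ) (hg : 1 ≤ g)
    (W X : Type) [AddCommGroup W] [Module ℂ W] [FiniteDimensional ℂ W]
    [AddCommGroup X] [Module ℂ X] [FiniteDimensional ℂ X]
    (x y : Fin g → Module.End ℂ W) (z : Fin g → Module.End ℂ X)
    (φ : ((Fin g → (X →ₗ[ℂ] W)) × (Fin g → (X →ₗ[ℂ] W))) →ₗ[ℂ] (X →ₗ[ℂ] W))
    (hφ : ∀ u v : Fin g → (X →ₗ[ℂ] W),
      φ (u, v) = ∑ i, ((x i) ∘ₗ (v i) + (u i) ∘ₗ (z i) - (y i) ∘ₗ (u i)))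
    (Δ : Submodule ℂ (W →ₗ[ℂ] X))
    (hΔ : ∀ ξ : W →ₗ[ℂ] X, ξ ∈ Δ ↔
      ∀ i, ξ ∘ₗ (x i) = 0 ∧ (z i) ∘ₗ ξ = ξ ∘ₗ (y i)) :
    Module.finrank ℂ (LinearMap.ker φ)
      = (2 * g - 1) * Module.finrank ℂ W * Module.finrank ℂ X + Module.finrank ℂ Δ := by
  classical
  set ψ := psiMap g W X x y z with hψdef
  -- kernel of ψ is Δ
  have hker : LinearMap.ker ψ = Δ := by
    ext ξ
    simp only [LinearMap.mem_ker, hΔ, hψdef, psiMap, LinearMap.coe_mk, AddHom.coe_mk,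
      Prod.mk_eq_zero, funext_iff, Pi.zero_apply, sub_eq_zero]
    constructor
    · rintro ⟨h1, h2⟩ i; exact ⟨h2 i, h1 i⟩
    · intro h; exact ⟨fun i => (h i).2, fun i => (h i).1⟩
  -- key identity : traceT ∘ φ = ψ.dualMap ∘ traceS
  have key : (traceT W X) ∘ₗ φ = ψ.dualMap ∘ₗ (traceS g W X) := by
    apply LinearMap.ext
    rintro ⟨u, v⟩
    apply LinearMap.ext
    intro ξ
    have lhs : ((traceT W X) ∘ₗ φ) (u, v) ξ
        = ∑ i, (LinearMap.trace ℂ W ((x i ∘ₗ v i) ∘ₗ ξ)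
            + LinearMap.trace ℂ W ((u i ∘ₗ z i) ∘ₗ ξ)
            - LinearMap.trace ℂ W ((y i ∘ₗ u i) ∘ₗ ξ)) := by
      have hsum : (∑ i, ((x i) ∘ₗ (v i) + (u i) ∘ₗ (z i) - (y i) ∘ₗ (u i))) ∘ₗ ξ
          = ∑ i, ((x i ∘ₗ v i) ∘ₗ ξ + (u i ∘ₗ z i) ∘ₗ ξ - (y i ∘ₗ u i) ∘ₗ ξ) := by
        ext w
        simp [LinearMap.sum_apply, LinearMap.comp_apply, LinearMap.sub_apply,
          LinearMap.add_apply, Finset.sum_apply]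
      simp [traceT_apply, hφ, hsum, map_sum, map_add, map_sub]
    have rhs : (ψ.dualMap ∘ₗ (traceS g W X)) (u, v) ξ
        = ∑ i, ((LinearMap.trace ℂ W (u i ∘ₗ ((z i) ∘ₗ ξ))
            - LinearMap.trace ℂ W (u i ∘ₗ (ξ ∘ₗ (y i))))
            + LinearMap.trace ℂ W (v i ∘ₗ (ξ ∘ₗ (x i)))) := by
      simp only [LinearMap.comp_apply, LinearMap.dualMap_apply, traceS_apply,
        hψdef, psiMap, LinearMap.coe_mk, AddHom.coe_mk, traceT_apply, comp_sub,
        map_sub, Finset.sum_add_distrib, Finset.sum_sub_distrib]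
    rw [lhs, rhs]
    apply Finset.sum_congr rfl
    intro i _
    have t1 : LinearMap.trace ℂ W ((x i ∘ₗ v i) ∘ₗ ξ)
        = LinearMap.trace ℂ W (v i ∘ₗ (ξ ∘ₗ (x i))) := by
      have h := LinearMap.trace_comp_comm' (v i ∘ₗ ξ) ((x i : W →ₗ[ℂ] W))
      simpa [LinearMap.comp_assoc] using h
    have t2 : LinearMap.trace ℂ W ((u i ∘ₗ z i) ∘ₗ ξ)
        = LinearMap.trace ℂ W (u i ∘ₗ ((z i) ∘ₗ ξ)) := by
      rw [LinearMap.comp_assoc]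
    have t3 : LinearMap.trace ℂ W ((y i ∘ₗ u i) ∘ₗ ξ)
        = LinearMap.trace ℂ W (u i ∘ₗ (ξ ∘ₗ (y i))) := by
      have h := LinearMap.trace_comp_comm' (u i ∘ₗ ξ) ((y i : W →ₗ[ℂ] W))
      simpa [LinearMap.comp_assoc] using h
    rw [t1, t2, t3]
    ring
  -- equivalences
  have hdT : Module.finrank ℂ (X →ₗ[ℂ] W)
      = Module.finrank ℂ (Module.Dual ℂ (W →ₗ[ℂ] X)) := by
    simp [Module.finrank_linearMap, mul_comm]
  have hdS : Module.finrank ℂ ((Fin g → (X →ₗ[ℂ] W)) × (Fin g → (X →ₗ[ℂ] W)))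
      = Module.finrank ℂ
          (Module.Dual ℂ ((Fin g → (W →ₗ[ℂ] X)) × (Fin g → (W →ₗ[ℂ] X)))) := by
    simp [Module.finrank_prod, Module.finrank_pi_fintype, Module.finrank_linearMap, mul_comm]
  set Te := LinearMap.linearEquivOfInjective (traceT W X) (traceT_injective W X) hdT with hTe
  set Se := LinearMap.linearEquivOfInjective (traceS g W X) (traceS_injective g W X) hdS with hSe
  have hTec : Te.toLinearMap = traceT W X := rfl
  have hSec : Se.toLinearMap = traceS g W X := rfl
  -- rank φ = rank ψ
  have hrank : Module.finrank ℂ (LinearMap.range φ)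
      = Module.finrank ℂ (LinearMap.range ψ) := by
    have h3 : Te.toLinearMap ∘ₗ φ = ψ.dualMap ∘ₗ Se.toLinearMap := by
      rw [hTec, hSec]; exact key
    have h1 : LinearMap.range (Te.toLinearMap ∘ₗ φ)
        = (LinearMap.range φ).map Te.toLinearMap := LinearMap.range_comp φ Te.toLinearMap
    have h2 : LinearMap.range (ψ.dualMap ∘ₗ Se.toLinearMap)
        = LinearMap.range ψ.dualMap :=
      LinearMap.range_comp_of_range_eq_top ψ.dualMap (LinearEquiv.range Se)
    calc Module.finrank ℂ (LinearMap.range φ)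
        = Module.finrank ℂ ((LinearMap.range φ).map Te.toLinearMap) :=
          (LinearEquiv.finrank_map_eq Te _).symm
      _ = Module.finrank ℂ (LinearMap.range ψ.dualMap) := by rw [← h1, h3, h2]
      _ = Module.finrank ℂ (LinearMap.range ψ) :=
          LinearMap.finrank_range_dualMap_eq_finrank_range ψ
  -- rank-nullity
  have e1 := LinearMap.finrank_range_add_finrank_ker φ
  have e2 := LinearMap.finrank_range_add_finrank_ker ψ
  rw [hker] at e2
  rw [hrank] at e1
  rw [Module.finrank_prod, Module.finrank_pi_fintype, Module.finrank_linearMap] at e1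
  rw [Module.finrank_linearMap] at e2
  -- arithmetic
  obtain ⟨m, rfl⟩ : ∃ m, g = m + 1 := ⟨g - 1, by omega⟩
  simp only [Finset.sum_const, Finset.card_univ, Fintype.card_fin, smul_eq_mul] at e1
  have hco : 2 * (m + 1) - 1 = 2 * m + 1 := by omega
  rw [hco]
  set dW := Module.finrank ℂ W
  set dX := Module.finrank ℂ X
  have a1 : (m + 1) * (dX * dW) = m * (dW * dX) + dW * dX := by ring
  have a2 : (2 * m + 1) * dW * dX = m * (dW * dX) + m * (dW * dX) + dW * dX := by ring
  rw [a1] at e1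
  rw [a2]
  generalize m * (dW * dX) = B at e1 ⊢
  omega
end

section
/- Fix a vertex i ∈ I, finite-dimensional complex vector spaces (𝔍_j)_{j∈I}, a representation y = (y_h)_{h∈H} of the doubled quiver on (𝔍_j), a finite-dimensional complex vector space X, and an endomorphism z_a ∈ End(X) for every loop a ∈ H at i (arrows with s(a) = t(a) = i). Assume that the smallest I-graded subspace of ⊕_{j∈I} 𝔍_j that contains ⊕_{j≠i} 𝔍_j and is invariant under all the maps y_h (h ∈ H) is the whole space ⊕_{j∈I} 𝔍_j. Then the linear map φ : ⊕_{h∈H, s(h)=i} Hom(X, 𝔍_{t(h)}) → Hom(X, 𝔍_i) defined by φ(η) = Σ_{h∈H: s(h)=i} ε(h)·( y_{h̄} ∘ η_h + η_{h̄} ∘ z_h ), where the term η_{h̄} ∘ z_h is understood to be 0 unless h is a loop at i, is surjective. -/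
/-! Doubled quiver setup: a quiver has vertex set `I` and arrow set `Ω` with source and
target maps `s t : Ω → I`.  The doubled quiver has arrow set `H = Ω ⊕ Ω`, the second
copy consisting of the reversed arrows; `bar` is the involution exchanging the copies,
and `eps` is `1` on `Ω` and `−1` on `Ω̄`. -/

/-- The arrow set of the doubled quiver. -/
abbrev DblH (Ω : Type) : Type := Ω ⊕ Ω

/-- Source map of the doubled quiver. -/
def dblSrc {I Ω : Type} (s t : Ω → I) : DblH Ω → I := Sum.elim s t

/-- Target map of the doubled quiver. -/
def dblTgt {I Ω : Type} (s t : Ω → I) : DblH Ω → I := Sum.elim t s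

/-- The involution `h ↦ h̄` of the doubled quiver. -/
def dblBar {Ω : Type} : DblH Ω → DblH Ω := Sum.elim Sum.inr Sum.inl

/-- `ε(h) = 1` for `h ∈ Ω`, `ε(h) = −1` for `h ∈ Ω̄`. -/
def dblEps {Ω : Type} : DblH Ω → ℂ := Sum.elim (fun _ => 1) (fun _ => -1)

theorem dblSrc_bar {I Ω : Type} (s t : Ω → I) (h : DblH Ω) :
    dblSrc s t (dblBar h) = dblTgt s t h := by cases h <;> rfl

theorem dblTgt_bar {I Ω : Type} (s t : Ω → I) (h : DblH Ω) :
    dblTgt s t (dblBar h) = dblSrc s t h := by cases h <;> rfl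

/-- Transport of a linear map along an equality of vertices (cast of the codomain). -/
def cmap {I : Type} (J : I → Type) [∀ j, AddCommGroup (J j)] [∀ j, Module ℂ (J j)]
    {X : Type} [AddCommGroup X] [Module ℂ X] {a b : I} (hab : a = b)
    (f : X →ₗ[ℂ] J a) : X →ₗ[ℂ] J b := hab ▸ f

set_option linter.unusedSectionVars false

section Aux

variable {I Ω : Type} [Fintype I] [Fintype Ω] [DecidableEq I]
    (s t : Ω → I)
    (J : I → Type) [∀ j, AddCommGroup (J j)] [∀ j, Module ℂ (J j)]
    (i : I)
    (y : ∀ h : DblH Ω, J (dblSrc s t h) →ₗ[ℂ] J (dblTgt s t h))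
    {X : Type} [AddCommGroup X] [Module ℂ X]
    (z : DblH Ω → Module.End ℂ X)

theorem cmap_add {a b : I} (p : a = b) (f g : X →ₗ[ℂ] J a) :
    cmap J p (f + g) = cmap J p f + cmap J p g := by cases p; rfl

theorem cmap_smul {a b : I} (p : a = b) (c : ℂ) (f : X →ₗ[ℂ] J a) :
    cmap J p (c • f) = c • cmap J p f := by cases p; rfl

theorem cmap_zero {a b : I} (p : a = b) : cmap J p (0 : X →ₗ[ℂ] J a) = 0 := by cases p; rfl

noncomputable def FmT (η : ∀ h : DblH Ω, X →ₗ[ℂ] J (dblTgt s t h)) (h : DblH Ω) :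
    X →ₗ[ℂ] J i :=
  if c : dblSrc s t h = i then
    dblEps h •
      cmap J ((dblTgt_bar s t h).trans c)
        ((y (dblBar h)) ∘ₗ (cmap J (dblSrc_bar s t h).symm (η h)) +
          (if dblTgt s t h = i then (η (dblBar h)) ∘ₗ (z h) else 0))
  else 0

noncomputable def Fm (η : ∀ h : DblH Ω, X →ₗ[ℂ] J (dblTgt s t h)) : X →ₗ[ℂ] J i :=
  ∑ h : DblH Ω, FmT s t J i y z η h

theorem FmT_eq_zero (η : ∀ h : DblH Ω, X →ₗ[ℂ] J (dblTgt s t h)) (h : DblH Ω)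
    (h1 : η h = 0) (h2 : η (dblBar h) = 0) : FmT s t J i y z η h = 0 := by
  unfold FmT
  split_ifs with c c2 <;>
    simp [h1, h2, cmap_zero, LinearMap.comp_zero, LinearMap.zero_comp]

theorem Fm_add (η η' : ∀ h : DblH Ω, X →ₗ[ℂ] J (dblTgt s t h)) :
    Fm s t J i y z (η + η') = Fm s t J i y z η + Fm s t J i y z η' := by
  unfold Fm FmT
  rw [← Finset.sum_add_distrib]
  refine Finset.sum_congr rfl fun h _ => ?_
  by_cases c : dblSrc s t h = i
  · rw [dif_pos c, dif_pos c, dif_pos c, ← smul_add, ← cmap_add]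
    congr 2
    by_cases c2 : dblTgt s t h = i
    · rw [if_pos c2, if_pos c2, if_pos c2]
      simp only [Pi.add_apply, cmap_add, LinearMap.comp_add, LinearMap.add_comp]
      abel
    · rw [if_neg c2, if_neg c2, if_neg c2]
      simp only [Pi.add_apply, cmap_add, LinearMap.comp_add]
      abel
  · rw [dif_neg c, dif_neg c, dif_neg c, add_zero]

theorem Fm_smul (r : ℂ) (η : ∀ h : DblH Ω, X →ₗ[ℂ] J (dblTgt s t h)) :
    Fm s t J i y z (r • η) = r • Fm s t J i y z η := by
  unfold Fm FmT
  rw [Finset.smul_sum]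
  refine Finset.sum_congr rfl fun h _ => ?_
  by_cases c : dblSrc s t h = i
  · rw [dif_pos c, dif_pos c]
    rw [smul_comm]
    congr 1
    rw [← cmap_smul]
    congr 1
    by_cases c2 : dblTgt s t h = i
    · rw [if_pos c2, if_pos c2]
      simp only [Pi.smul_apply, cmap_smul, LinearMap.comp_smul, LinearMap.smul_comp, smul_add]
    · rw [if_neg c2, if_neg c2]
      simp only [Pi.smul_apply, cmap_smul, LinearMap.comp_smul, smul_add, smul_zero]
  · rw [dif_neg c, dif_neg c, smul_zero]

theorem Fm_zero : Fm s t J i y z 0 = 0 := by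
  unfold Fm
  refine Finset.sum_eq_zero fun h _ => ?_
  exact FmT_eq_zero s t J i y z 0 h rfl rfl

noncomputable def Wsub : Submodule ℂ (X →ₗ[ℂ] J i) where
  carrier := Set.range (Fm s t J i y z)
  add_mem' := by
    rintro w1 w2 ⟨a, rfl⟩ ⟨b, rfl⟩
    exact ⟨a + b, Fm_add s t J i y z a b⟩
  zero_mem' := ⟨0, Fm_zero s t J i y z⟩
  smul_mem' := by
    rintro r w ⟨a, rfl⟩
    exact ⟨r • a, Fm_smul s t J i y z r a⟩


set_option linter.unusedSectionVars false

theorem key (h : DblH Ω) (v : J (dblSrc s t h))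
    (hv : ∀ ξ' : X →ₗ[ℂ] ℂ, ∀ c' : dblSrc s t h = i,
        cmap J c' (ξ'.smulRight v) ∈ Wsub s t J i y z)
    (ξ : X →ₗ[ℂ] ℂ) (c : dblTgt s t h = i) :
    cmap J c (ξ.smulRight (y h v)) ∈ Wsub s t J i y z := by
  classical
  cases h with
  | inl a =>
    subst c
    set W := Wsub s t J (dblTgt s t (Sum.inl a)) y z with hW
    let η : ∀ h : DblH Ω, X →ₗ[ℂ] J (dblTgt s t h) :=
      Pi.single (Sum.inr a) (LinearMap.smulRight ξ v)
    have hη1 : η (Sum.inr a) = LinearMap.smulRight ξ v := Pi.single_eq_same _ _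
    have hη2 : η (dblBar (Sum.inr a)) = 0 := Pi.single_eq_of_ne (by simp [dblBar]) _
    have hη3 : η (Sum.inl a) = 0 := Pi.single_eq_of_ne (by simp) _
    have hη4 : η (dblBar (Sum.inl a)) = LinearMap.smulRight ξ v := Pi.single_eq_same _ _
    have hsum : Fm s t J (dblTgt s t (Sum.inl a)) y z η
        = FmT s t J _ y z η (Sum.inl a) + FmT s t J _ y z η (Sum.inr a) := by
      have hvan : ∀ b ∈ Finset.univ, b ∉ ({Sum.inl a, Sum.inr a} : Finset (DblH Ω)) →
          FmT s t J (dblTgt s t (Sum.inl a)) y z η b = 0 := by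
        intro b _ hb
        simp only [Finset.mem_insert, Finset.mem_singleton, not_or] at hb
        refine FmT_eq_zero s t J _ y z η b ?_ ?_
        · exact Pi.single_eq_of_ne hb.2 _
        · refine Pi.single_eq_of_ne ?_ _
          cases b <;> simp_all [dblBar]
      rw [show Fm s t J (dblTgt s t (Sum.inl a)) y z η
            = ∑ b : DblH Ω, FmT s t J _ y z η b from rfl,
          ← Finset.sum_subset (Finset.subset_univ _) hvan, Finset.sum_pair (by simp)]
    have e2 : FmT s t J (dblTgt s t (Sum.inl a)) y z η (Sum.inr a)
        = (-1 : ℂ) • (LinearMap.smulRight ξ (y (Sum.inl a) v)) := by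
      unfold FmT
      rw [dif_pos (show dblSrc s t (Sum.inr a) = dblTgt s t (Sum.inl a) from rfl)]
      rw [hη2, LinearMap.zero_comp, ite_self, add_zero, hη1]
      ext x
      show (-1 : ℂ) • (y (Sum.inl a) (ξ x • v)) = (-1 : ℂ) • (ξ x • y (Sum.inl a) v)
      rw [map_smul]
    show LinearMap.smulRight ξ (y (Sum.inl a) v) ∈ W
    by_cases d : dblSrc s t (Sum.inl a) = dblTgt s t (Sum.inl a)
    · have e1 : FmT s t J (dblTgt s t (Sum.inl a)) y z η (Sum.inl a)
          = cmap J d (LinearMap.smulRight (ξ ∘ₗ (z (Sum.inl a))) v) := by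
        unfold FmT
        rw [dif_pos d, hη3, cmap_zero, LinearMap.comp_zero,
            if_pos (show dblTgt s t (Sum.inl a) = dblTgt s t (Sum.inl a) from rfl),
            zero_add, hη4,
            show dblEps (Sum.inl a) = (1 : ℂ) from rfl, one_smul]
        rfl
      have hG : LinearMap.smulRight ξ (y (Sum.inl a) v)
          = cmap J d (LinearMap.smulRight (ξ ∘ₗ (z (Sum.inl a))) v)
            - Fm s t J (dblTgt s t (Sum.inl a)) y z η := by
        rw [hsum, e1, e2, neg_one_smul]; abel
      rw [hG]
      exact sub_mem (hv (ξ ∘ₗ (z (Sum.inl a))) d) ⟨η, rfl⟩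
    · have e1 : FmT s t J (dblTgt s t (Sum.inl a)) y z η (Sum.inl a) = 0 := by
        unfold FmT; rw [dif_neg d]
      have hG : LinearMap.smulRight ξ (y (Sum.inl a) v)
          = -Fm s t J (dblTgt s t (Sum.inl a)) y z η := by
        rw [hsum, e1, e2, neg_one_smul, zero_add, neg_neg]
      rw [hG]
      exact neg_mem ⟨η, rfl⟩
  | inr a =>
    subst c
    set W := Wsub s t J (dblTgt s t (Sum.inr a)) y z with hW
    let η : ∀ h : DblH Ω, X →ₗ[ℂ] J (dblTgt s t h) :=
      Pi.single (Sum.inl a) (LinearMap.smulRight ξ v : X →ₗ[ℂ] J (dblTgt s t (Sum.inl a)))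
    have hη1 : η (Sum.inl a) = LinearMap.smulRight ξ v := Pi.single_eq_same _ _
    have hη2 : η (dblBar (Sum.inl a)) = 0 := Pi.single_eq_of_ne (by simp [dblBar]) _
    have hη3 : η (Sum.inr a) = 0 := Pi.single_eq_of_ne (by simp) _
    have hη4 : η (dblBar (Sum.inr a)) = LinearMap.smulRight ξ v := Pi.single_eq_same _ _
    have hsum : Fm s t J (dblTgt s t (Sum.inr a)) y z η
        = FmT s t J _ y z η (Sum.inl a) + FmT s t J _ y z η (Sum.inr a) := by
      have hvan : ∀ b ∈ Finset.univ, b ∉ ({Sum.inl a, Sum.inr a} : Finset (DblH Ω)) →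
          FmT s t J (dblTgt s t (Sum.inr a)) y z η b = 0 := by
        intro b _ hb
        simp only [Finset.mem_insert, Finset.mem_singleton, not_or] at hb
        refine FmT_eq_zero s t J _ y z η b ?_ ?_
        · exact Pi.single_eq_of_ne hb.1 _
        · refine Pi.single_eq_of_ne ?_ _
          cases b <;> simp_all [dblBar]
      rw [show Fm s t J (dblTgt s t (Sum.inr a)) y z η
            = ∑ b : DblH Ω, FmT s t J _ y z η b from rfl,
          ← Finset.sum_subset (Finset.subset_univ _) hvan, Finset.sum_pair (by simp)]
    have e1 : FmT s t J (dblTgt s t (Sum.inr a)) y z η (Sum.inl a)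
        = LinearMap.smulRight ξ (y (Sum.inr a) v) := by
      unfold FmT
      rw [dif_pos (show dblSrc s t (Sum.inl a) = dblTgt s t (Sum.inr a) from rfl)]
      rw [hη2, LinearMap.zero_comp, ite_self, add_zero, hη1]
      ext x
      show (1 : ℂ) • (y (Sum.inr a) (ξ x • v)) = ξ x • y (Sum.inr a) v
      rw [map_smul, one_smul]
    show LinearMap.smulRight ξ (y (Sum.inr a) v) ∈ W
    by_cases d : dblSrc s t (Sum.inr a) = dblTgt s t (Sum.inr a)
    · have e2 : FmT s t J (dblTgt s t (Sum.inr a)) y z η (Sum.inr a)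
          = (-1 : ℂ) • cmap J d (LinearMap.smulRight (ξ ∘ₗ (z (Sum.inr a))) v) := by
        unfold FmT
        rw [dif_pos d, hη3, cmap_zero, LinearMap.comp_zero,
            if_pos (show dblTgt s t (Sum.inr a) = dblTgt s t (Sum.inr a) from rfl),
            zero_add, hη4,
            show dblEps (Sum.inr a) = (-1 : ℂ) from rfl]
        rfl
      have hG : LinearMap.smulRight ξ (y (Sum.inr a) v)
          = Fm s t J (dblTgt s t (Sum.inr a)) y z η
            + cmap J d (LinearMap.smulRight (ξ ∘ₗ (z (Sum.inr a))) v) := by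
        rw [hsum, e1, e2, neg_one_smul]; abel
      rw [hG]
      exact add_mem ⟨η, rfl⟩ (hv (ξ ∘ₗ (z (Sum.inr a))) d)
    · have e2 : FmT s t J (dblTgt s t (Sum.inr a)) y z η (Sum.inr a) = 0 := by
        unfold FmT; rw [dif_neg d]
      have hG : LinearMap.smulRight ξ (y (Sum.inr a) v)
          = Fm s t J (dblTgt s t (Sum.inr a)) y z η := by
        rw [hsum, e1, e2, add_zero]
      rw [hG]
      exact ⟨η, rfl⟩


noncomputable def Ssub (j : I) : Submodule ℂ (J j) where
  carrier := {v | ∀ ξ : X →ₗ[ℂ] ℂ, ∀ c : j = i, cmap J c (ξ.smulRight v) ∈ Wsub s t J i y z}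
  add_mem' := by
    intro u v hu hv ξ c
    have : (ξ.smulRight (u + v) : X →ₗ[ℂ] J j) = ξ.smulRight u + ξ.smulRight v := by
      ext x; simp [smul_add]
    rw [this, cmap_add]
    exact add_mem (hu ξ c) (hv ξ c)
  zero_mem' := by
    intro ξ c
    have : (ξ.smulRight (0 : J j) : X →ₗ[ℂ] J j) = 0 := by ext x; simp
    rw [this, cmap_zero]
    exact zero_mem _
  smul_mem' := by
    intro r v hv ξ c
    have : (ξ.smulRight (r • v) : X →ₗ[ℂ] J j) = r • ξ.smulRight v := by
      ext x
      simp only [LinearMap.smulRight_apply, LinearMap.smul_apply]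
      rw [smul_comm]
    rw [this, cmap_smul]
    exact Submodule.smul_mem _ r (hv ξ c)

end Aux

/-- if the smallest `I`-graded subspace of `⊕ⱼ 𝔍ⱼ` containing `⊕_{j≠i} 𝔍ⱼ`
and invariant under the representation `y` is everything, then the map
`φ(η) = Σ_{h : s(h)=i} ε(h)·(y_{h̄} ∘ η_h + η_{h̄} ∘ z_h)` (the second term present only
for loops at `i`) is surjective onto `Hom(X, 𝔍ᵢ)`. -/
theorem phi_surjective
    (I Ω : Type) [Fintype I] [Fintype Ω] [DecidableEq I]
    (s t : Ω → I)
    (J : I → Type) [∀ j, AddCommGroup (J j)] [∀ j, Module ℂ (J j)]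
    [∀ j, FiniteDimensional ℂ (J j)]
    (i : I)
    (y : ∀ h : DblH Ω, J (dblSrc s t h) →ₗ[ℂ] J (dblTgt s t h))
    (X : Type) [AddCommGroup X] [Module ℂ X] [FiniteDimensional ℂ X]
    (z : DblH Ω → Module.End ℂ X)
    (hgen : ∀ S : ∀ j, Submodule ℂ (J j),
      (∀ j, j ≠ i → S j = ⊤) →
      (∀ h : DblH Ω, ∀ v ∈ S (dblSrc s t h), y h v ∈ S (dblTgt s t h)) →
      S i = ⊤) :
    ∀ w : X →ₗ[ℂ] J i,
      ∃ η : ∀ h : DblH Ω, X →ₗ[ℂ] J (dblTgt s t h),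
        (∑ h : DblH Ω,
          if c : dblSrc s t h = i then
            dblEps h •
              cmap J ((dblTgt_bar s t h).trans c)
                ((y (dblBar h)) ∘ₗ (cmap J (dblSrc_bar s t h).symm (η h)) +
                  (if dblTgt s t h = i then (η (dblBar h)) ∘ₗ (z h) else 0))
          else 0) = w := by
  
  intro w
  suffices hw : w ∈ Wsub s t J i y z by exact hw
  have htop : Ssub s t J i y z (X := X) i = ⊤ := by
    refine hgen (fun j => Ssub s t J i y z j) ?_ ?_
    · intro j hj
      refine top_unique fun v _ => ?_
      intro ξ c
      exact absurd c hj
    · intro h v hv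
      exact key s t J i y z h v hv
  have hr1 : ∀ (ξ : X →ₗ[ℂ] ℂ) (v : J i), LinearMap.smulRight ξ v ∈ Wsub s t J i y z := by
    intro ξ v
    have hv : v ∈ Ssub s t J i y z (X := X) i := by rw [htop]; trivial
    exact hv ξ rfl
  let b := Module.finBasis ℂ X
  have hw : w = ∑ k, LinearMap.smulRight (b.coord k) (w (b k)) := by
    ext x
    rw [LinearMap.sum_apply]
    simp only [LinearMap.smulRight_apply, Module.Basis.coord_apply]
    calc w x = w (∑ k, b.repr x k • b k) := by rw [Module.Basis.sum_repr]
      _ = ∑ k, b.repr x k • w (b k) := by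
            rw [map_sum]
            exact Finset.sum_congr rfl fun k _ => by rw [map_smul]
  rw [hw]
  exact Submodule.sum_mem _ fun k _ => hr1 _ _
end

section
/- Let V and W be finite-dimensional complex vector spaces, and let y ∈ End(V) and z ∈ End(W) have disjoint spectra: spectrum(y) ∩ spectrum(z) = ∅. If v ∈ V is a cyclic vector for y, i.e. the span of { y^k v : k ∈ ℕ } equals V, and w ∈ W is a cyclic vector for z, then (v, w) is a cyclic vector for the endomorphism y ⊕ z of V × W, i.e. the span of { (y ⊕ z)^k (v, w) : k ∈ ℕ } equals V × W. -/
open Polynomial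

private lemma aeval_mem_span_pow {M : Type} [AddCommGroup M] [Module ℂ M]
    (f : Module.End ℂ M) (x : M) (p : ℂ[X]) :
    (Polynomial.aeval f p) x ∈ Submodule.span ℂ (Set.range fun k : ℕ => (f ^ k) x) := by
  induction p using Polynomial.induction_on' with
  | add p q hp hq =>
    rw [map_add]
    exact Submodule.add_mem _ hp hq
  | monomial n a =>
    rw [Polynomial.aeval_monomial]
    rw [Module.End.mul_apply, Module.algebraMap_end_apply]
    exact Submodule.smul_mem _ _ (Submodule.subset_span ⟨n, rfl⟩)

private lemma prodMap_pow_apply {V W : Type} [AddCommGroup V] [Module ℂ V]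
    [AddCommGroup W] [Module ℂ W] (y : Module.End ℂ V) (z : Module.End ℂ W)
    (k : ℕ) (a : V) (b : W) :
    ((LinearMap.prodMap (y : V →ₗ[ℂ] V) (z : W →ₗ[ℂ] W) : Module.End ℂ (V × W)) ^ k) (a, b)
      = ((y ^ k) a, (z ^ k) b) := by
  induction k generalizing a b with
  | zero => simp
  | succ n ih =>
    rw [pow_succ, pow_succ, pow_succ, Module.End.mul_apply, Module.End.mul_apply,
      Module.End.mul_apply, LinearMap.prodMap_apply, ih]

private lemma aeval_prodMap_apply {V W : Type} [AddCommGroup V] [Module ℂ V]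
    [AddCommGroup W] [Module ℂ W] (y : Module.End ℂ V) (z : Module.End ℂ W)
    (p : ℂ[X]) (a : V) (b : W) :
    (Polynomial.aeval
      (LinearMap.prodMap (y : V →ₗ[ℂ] V) (z : W →ₗ[ℂ] W) : Module.End ℂ (V × W)) p) (a, b)
      = ((Polynomial.aeval y p) a, (Polynomial.aeval z p) b) := by
  induction p using Polynomial.induction_on' with
  | add p q hp hq => simp [map_add, hp, hq, Prod.ext_iff]
  | monomial n c =>
    rw [Polynomial.aeval_monomial, Polynomial.aeval_monomial, Polynomial.aeval_monomial,
      Module.End.mul_apply, Module.End.mul_apply, Module.End.mul_apply,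
      prodMap_pow_apply, Module.algebraMap_end_apply, Module.algebraMap_end_apply,
      Module.algebraMap_end_apply, Prod.smul_mk]

/-- If `y ∈ End(V)` and `z ∈ End(W)` have disjoint spectra, `v` is a cyclic
vector for `y` and `w` is a cyclic vector for `z`, then `(v, w)` is a cyclic vector for
`y ⊕ z ∈ End(V × W)`. -/
theorem cyclic_vector_prod_of_disjoint_spectra
    (V W : Type) [AddCommGroup V] [Module ℂ V] [FiniteDimensional ℂ V]
    [AddCommGroup W] [Module ℂ W] [FiniteDimensional ℂ W]
    (y : Module.End ℂ V) (z : Module.End ℂ W)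
    (hdisj : spectrum ℂ y ∩ spectrum ℂ z = ∅)
    (v : V) (hv : Submodule.span ℂ (Set.range fun k : ℕ => (y ^ k) v) = ⊤)
    (w : W) (hw : Submodule.span ℂ (Set.range fun k : ℕ => (z ^ k) w) = ⊤) :
    Submodule.span ℂ (Set.range fun k : ℕ =>
      ((LinearMap.prodMap (y : V →ₗ[ℂ] V) (z : W →ₗ[ℂ] W) : Module.End ℂ (V × W)) ^ k) (v, w))
      = ⊤ := by
  set f : Module.End ℂ (V × W) :=
    (LinearMap.prodMap (y : V →ₗ[ℂ] V) (z : W →ₗ[ℂ] W) : Module.End ℂ (V × W)) with hf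
  set S := Submodule.span ℂ (Set.range fun k : ℕ => (f ^ k) (v, w)) with hS
  have hcop : IsCoprime (minpoly ℂ y) (minpoly ℂ z) := by
    rw [Polynomial.isCoprime_iff_aeval_ne_zero_of_isAlgClosed (k := ℂ) ℂ]
    intro μ
    by_contra h
    push_neg at h
    have h1 : μ ∈ spectrum ℂ y := by
      rw [← Module.End.hasEigenvalue_iff_mem_spectrum, Module.End.hasEigenvalue_iff_isRoot]
      simpa [Polynomial.IsRoot, ← Polynomial.coe_aeval_eq_eval] using h.1
    have h2 : μ ∈ spectrum ℂ z := by
      rw [← Module.End.hasEigenvalue_iff_mem_spectrum, Module.End.hasEigenvalue_iff_isRoot]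
      simpa [Polynomial.IsRoot, ← Polynomial.coe_aeval_eq_eval] using h.2
    have : μ ∈ spectrum ℂ y ∩ spectrum ℂ z := ⟨h1, h2⟩
    rw [hdisj] at this
    exact this
  obtain ⟨a, b, hab⟩ := hcop
  have hby : Polynomial.aeval y (b * minpoly ℂ z) = 1 := by
    have := congrArg (Polynomial.aeval y) hab
    simpa [map_add, map_mul, minpoly.aeval] using this
  have haz : Polynomial.aeval z (a * minpoly ℂ y) = 1 := by
    have := congrArg (Polynomial.aeval z) hab
    simpa [map_add, map_mul, minpoly.aeval] using this
  have key1 : ∀ p : Polynomial ℂ, (((Polynomial.aeval y p) v, (0 : W)) : V × W) ∈ S := by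
    intro p
    have h := aeval_mem_span_pow f (v, w) (p * (b * minpoly ℂ z))
    rw [hf, aeval_prodMap_apply] at h
    have e1 : (Polynomial.aeval y (p * (b * minpoly ℂ z))) v = (Polynomial.aeval y p) v := by
      rw [map_mul, Module.End.mul_apply, hby]; rfl
    have e2 : (Polynomial.aeval z (p * (b * minpoly ℂ z))) w = 0 := by
      rw [map_mul, map_mul, Module.End.mul_apply, Module.End.mul_apply, minpoly.aeval]
      simp
    rwa [e1, e2] at h
  have key2 : ∀ p : Polynomial ℂ, (((0 : V), (Polynomial.aeval z p) w) : V × W) ∈ S := by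
    intro p
    have h := aeval_mem_span_pow f (v, w) (p * (a * minpoly ℂ y))
    rw [hf, aeval_prodMap_apply] at h
    have e1 : (Polynomial.aeval z (p * (a * minpoly ℂ y))) w = (Polynomial.aeval z p) w := by
      rw [map_mul, Module.End.mul_apply, haz]; rfl
    have e2 : (Polynomial.aeval y (p * (a * minpoly ℂ y))) v = 0 := by
      rw [map_mul, map_mul, Module.End.mul_apply, Module.End.mul_apply, minpoly.aeval]
      simp
    rwa [e1, e2] at h
  have hV : Submodule.map (LinearMap.inl ℂ V W) ⊤ ≤ S := by
    rw [← hv, Submodule.map_span, Submodule.span_le]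
    rintro _ ⟨_, ⟨k, rfl⟩, rfl⟩
    have := key1 (Polynomial.X ^ k)
    rwa [map_pow, Polynomial.aeval_X] at this
  have hW : Submodule.map (LinearMap.inr ℂ V W) ⊤ ≤ S := by
    rw [← hw, Submodule.map_span, Submodule.span_le]
    rintro _ ⟨_, ⟨k, rfl⟩, rfl⟩
    have := key2 (Polynomial.X ^ k)
    rwa [map_pow, Polynomial.aeval_X] at this
  rw [eq_top_iff]
  rintro ⟨u1, u2⟩ -
  have m1 : ((u1, (0 : W)) : V × W) ∈ S := hV ⟨u1, trivial, rfl⟩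
  have m2 : (((0 : V), u2) : V × W) ∈ S := hW ⟨u2, trivial, rfl⟩
  have := S.add_mem m1 m2
  simpa using this
end

section
/- Let g ≥ 2, ν ≥ 1 and let c = (c₁,…,c_r) be a composition of ν. Then there exists a tuple (x₁,…,x_g,y₁,…,y_g) of endomorphisms of ℂ^ν such that: (a) Σ_{i=1}^g (x_i y_i − y_i x_i) = 0; (b) the canonical flag (W_k) of (x_i,y_i) satisfies W_r = 0 and dim(W_{k−1}/W_k) = c_k for 1 ≤ k ≤ r; and (c) y₁ admits a cyclic vector: there exists v ∈ ℂ^ν with span{ y₁^k v : k ∈ ℕ } = ℂ^ν. -/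
set_option maxHeartbeats 1000000
set_option synthInstance.maxHeartbeats 200000

noncomputable section CyclicAux

namespace CyclicAux

open Module

variable (ν : ℕ) (c : List ℕ)

/-- Tail subspace: coordinates below `m` vanish. -/
def W (m : ℕ) : Submodule ℂ (Fin ν → ℂ) where
  carrier := {v | ∀ j : Fin ν, (j : ℕ) < m → v j = 0}
  add_mem' := fun ha hb j hj => by simp [ha j hj, hb j hj]
  zero_mem' := fun j hj => rfl
  smul_mem' := fun r a ha j hj => by simp [ha j hj]

lemma mem_W {m : ℕ} {v : Fin ν → ℂ} :
    v ∈ W ν m ↔ ∀ j : Fin ν, (j : ℕ) < m → v j = 0 := Iff.rfl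

lemma W_zero : W ν 0 = ⊤ := by ext v; simp [mem_W]

lemma W_anti {m n : ℕ} (h : m ≤ n) : W ν n ≤ W ν m :=
  fun v hv j hj => hv j (lt_of_lt_of_le hj h)

lemma W_nu : W ν ν = ⊥ := by
  ext v
  simp only [mem_W, Submodule.mem_bot]
  constructor
  · intro h; funext j; exact h j j.isLt
  · rintro rfl; intro j _; rfl

lemma single_mem_W {m : ℕ} {j : Fin ν} (h : m ≤ (j : ℕ)) (a : ℂ) :
    Pi.single j a ∈ W ν m := by
  intro i hi
  have hne : i ≠ j := by intro e; rw [e] at hi; omega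
  show (Pi.single j a : Fin ν → ℂ) i = 0
  rw [Pi.single_apply, if_neg hne]

/-- The shift endomorphism `e_j ↦ e_{j+1}` (and `e_{ν-1} ↦ 0`), in the form
`(y v) j = v (j-1)`. -/
def y1 : Module.End ℂ (Fin ν → ℂ) where
  toFun v := fun j => if h : (j : ℕ) = 0 then 0 else v ⟨(j : ℕ) - 1, by omega⟩
  map_add' a b := by funext j; by_cases h : (j : ℕ) = 0 <;> simp [h]
  map_smul' r a := by funext j; by_cases h : (j : ℕ) = 0 <;> simp [h]

lemma y1_apply (v : Fin ν → ℂ) (j : Fin ν) :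
    y1 ν v j = if h : (j : ℕ) = 0 then 0 else v ⟨(j : ℕ) - 1, by omega⟩ := rfl

lemma y1_mem {m : ℕ} {v : Fin ν → ℂ} (hv : v ∈ W ν m) : y1 ν v ∈ W ν m := by
  intro j hj
  rw [y1_apply]
  split
  · rfl
  · exact hv _ (show (j : ℕ) - 1 < m by omega)

lemma y1_single {t : ℕ} (ht : t + 1 < ν) :
    y1 ν (Pi.single (⟨t, by omega⟩ : Fin ν) 1) = Pi.single (⟨t + 1, ht⟩ : Fin ν) 1 := by
  funext j
  rw [y1_apply]
  by_cases h0 : (j : ℕ) = 0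
  · rw [dif_pos h0, Pi.single_apply,
      if_neg (by intro e; rw [e] at h0; simp at h0)]
  · rw [dif_neg h0, Pi.single_apply, Pi.single_apply]
    by_cases h1 : (j : ℕ) = t + 1
    · rw [if_pos (Fin.ext (show (j : ℕ) - 1 = t by omega)),
        if_pos (Fin.ext (show (j : ℕ) = t + 1 from h1))]
    · rw [if_neg (by
        intro e
        have he : (j : ℕ) - 1 = t := congrArg Fin.val e
        omega),
        if_neg (by intro e; apply h1; rw [e])]

lemma y1_pow (h0 : 0 < ν) :
    ∀ t, ∀ ht : t < ν, ((y1 ν) ^ t) (Pi.single (⟨0, h0⟩ : Fin ν) 1)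
      = Pi.single (⟨t, ht⟩ : Fin ν) 1 := by
  intro t
  induction t with
  | zero => intro ht; rw [pow_zero]; rfl
  | succ t ih =>
    intro ht
    rw [pow_succ', Module.End.mul_apply, ih (by omega), y1_single ν ht]

/-- Partial sums of the composition. -/
def s (k : ℕ) : ℕ := (c.take k).sum

lemma s_succ {k : ℕ} (h : k < c.length) : s c (k + 1) = s c k + c.get ⟨k, h⟩ := by
  unfold s
  rw [List.sum_take_succ _ _ h]
  rfl

lemma s_mono : Monotone (s c) := by
  apply monotone_nat_of_le_succ
  intro k
  rcases lt_or_ge k c.length with h | h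
  · rw [s_succ c h]; omega
  · unfold s
    rw [List.take_of_length_le h, List.take_of_length_le (by omega)]

lemma s_lt (hpos : ∀ a ∈ c, 0 < a) {k : ℕ} (h : k < c.length) :
    s c k < s c (k + 1) := by
  rw [s_succ c h]
  have := hpos (c.get ⟨k, h⟩) (c.get_mem _)
  omega

lemma s_length : s c c.length = c.sum := by
  unfold s; rw [List.take_length]

/-- Block index of coordinate `j`. -/
def blk (j : ℕ) : ℕ := Nat.findGreatest (fun k => s c k ≤ j) c.length

lemma s_blk_le (j : ℕ) : s c (blk c j) ≤ j := by
  unfold blk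
  exact Nat.findGreatest_spec (P := fun k => s c k ≤ j) (m := 0) (Nat.zero_le _)
    (show s c 0 ≤ j by simp [s])

lemma le_blk {k j : ℕ} (h1 : k ≤ c.length) (h2 : s c k ≤ j) : k ≤ blk c j :=
  Nat.le_findGreatest h1 h2

/-- Target index of coordinate `j` under `x₂`. -/
def nxt (j : ℕ) : ℕ := s c (blk c j + 1)

lemma nxt_ge {t j : ℕ} (h1 : t ≤ c.length) (h2 : s c t ≤ j) : s c (t + 1) ≤ nxt c j :=
  s_mono c (Nat.succ_le_succ (le_blk c h1 h2))

lemma nxt_eq {k j : ℕ} (hk : k < c.length) (h1 : s c k ≤ j) (h2 : j < s c (k + 1)) :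
    nxt c j = s c (k + 1) := by
  have hb : blk c j = k := by
    have hge := le_blk c (le_of_lt hk) h1
    have hle : ¬ (k + 1 ≤ blk c j) := by
      intro h
      have hs1 := s_blk_le c j
      have hs2 := s_mono c h
      omega
    omega
  rw [nxt, hb]

/-- The endomorphism sending `e_j` to `e_{nxt j}` (or `0` if `nxt j ≥ ν`). -/
def x2 : Module.End ℂ (Fin ν → ℂ) where
  toFun v := fun m => ∑ j : Fin ν, if (m : ℕ) = nxt c (j : ℕ) then v j else 0
  map_add' a b := by
    funext m
    show (∑ j : Fin ν, if (m : ℕ) = nxt c (j : ℕ) then (a + b) j else 0)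
        = (∑ j : Fin ν, if (m : ℕ) = nxt c (j : ℕ) then a j else 0)
        + (∑ j : Fin ν, if (m : ℕ) = nxt c (j : ℕ) then b j else 0)
    rw [← Finset.sum_add_distrib]
    exact Finset.sum_congr rfl fun j _ => by split <;> simp
  map_smul' r a := by
    funext m
    show (∑ j : Fin ν, if (m : ℕ) = nxt c (j : ℕ) then (r • a) j else 0)
        = r • (∑ j : Fin ν, if (m : ℕ) = nxt c (j : ℕ) then a j else 0)
    rw [Finset.smul_sum]
    exact Finset.sum_congr rfl fun j _ => by split <;> simp

lemma x2_apply (v : Fin ν → ℂ) (m : Fin ν) :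
    x2 ν c v m = ∑ j : Fin ν, if (m : ℕ) = nxt c (j : ℕ) then v j else 0 := rfl

lemma x2_mem {m m' : ℕ} (h : ∀ j : ℕ, j < ν → m ≤ j → m' ≤ nxt c j)
    {v : Fin ν → ℂ} (hv : v ∈ W ν m) : x2 ν c v ∈ W ν m' := by
  intro i hi
  rw [x2_apply]
  apply Finset.sum_eq_zero
  intro j _
  by_cases hvj : m ≤ (j : ℕ)
  · rw [if_neg]
    have := h (j : ℕ) j.isLt hvj
    omega
  · rw [hv j (by omega)]
    split <;> rfl

lemma x2_single (j : Fin ν) (a : ℂ) (i : Fin ν) :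
    x2 ν c (Pi.single j a) i = if (i : ℕ) = nxt c (j : ℕ) then a else 0 := by
  rw [x2_apply]
  rw [Finset.sum_eq_single j]
  · rw [Pi.single_eq_same]
  · intro b _ hb; simp [Pi.single_eq_of_ne hb]
  · intro h; exact absurd (Finset.mem_univ j) h

lemma finrank_W (m : ℕ) (hm : m ≤ ν) : Module.finrank ℂ (W ν m) = ν - m := by
  classical
  have hspan : Submodule.span ℂ
      (Set.range fun j : {j : Fin ν // m ≤ (j : ℕ)} => (Pi.single (j : Fin ν) 1 : Fin ν → ℂ))
      = W ν m := by
    apply le_antisymm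
    · rw [Submodule.span_le]
      rintro _ ⟨j, rfl⟩
      exact single_mem_W ν j.2 1
    · intro v hv
      have hv' : v = ∑ j : Fin ν, Pi.single j (v j) := (Finset.univ_sum_single v).symm
      rw [hv']
      apply Submodule.sum_mem
      intro j _
      by_cases hj : m ≤ (j : ℕ)
      · have he : Pi.single j (v j) = v j • (Pi.single j 1 : Fin ν → ℂ) := by
          rw [← Pi.single_smul, smul_eq_mul, mul_one]
        rw [he]
        exact Submodule.smul_mem _ _ (Submodule.subset_span ⟨⟨j, hj⟩, rfl⟩)
      · rw [hv j (by omega), Pi.single_zero]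
        exact Submodule.zero_mem _
  have hli : LinearIndependent ℂ
      (fun j : {j : Fin ν // m ≤ (j : ℕ)} => (Pi.single (j : Fin ν) 1 : Fin ν → ℂ)) := by
    have hb := (Pi.basisFun ℂ (Fin ν)).linearIndependent
    have he : (fun j : {j : Fin ν // m ≤ (j : ℕ)} => (Pi.single (j : Fin ν) 1 : Fin ν → ℂ))
        = (Pi.basisFun ℂ (Fin ν)) ∘ (fun j : {j : Fin ν // m ≤ (j : ℕ)} => j.1) := by
      funext j
      simp [Pi.basisFun_apply]
    rw [he]
    exact hb.comp _ Subtype.val_injective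
  rw [← hspan, finrank_span_eq_card hli]
  have hcard : Fintype.card {j : Fin ν // m ≤ (j : ℕ)} = Fintype.card (Fin (ν - m)) := by
    apply Fintype.card_congr
    exact {
      toFun := fun j => ⟨(j.1 : ℕ) - m, by have := j.1.isLt; have := j.2; omega⟩
      invFun := fun i => ⟨⟨m + (i : ℕ), by have := i.isLt; omega⟩, by simp⟩
      left_inv := fun j => by
        apply Subtype.ext
        apply Fin.ext
        show m + ((j.1 : ℕ) - m) = (j.1 : ℕ)
        have := j.2
        omega
      right_inv := fun i => by
        apply Fin.ext
        show m + (i : ℕ) - m = (i : ℕ)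
        omega }
  rw [hcard, Fintype.card_fin]

end CyclicAux

end CyclicAux

open CyclicAux

namespace CyclicAux

/-- The `x`-tuple: only `x₂` is nonzero. -/
noncomputable def X (g ν : ℕ) (c : List ℕ) : Fin g → Module.End ℂ (Fin ν → ℂ) :=
  fun i => if (i : ℕ) = 1 then x2 ν c else 0

/-- The `y`-tuple: only `y₁` is nonzero. -/
noncomputable def Y (g ν : ℕ) : Fin g → Module.End ℂ (Fin ν → ℂ) :=
  fun i => if (i : ℕ) = 0 then y1 ν else 0

lemma flag_eq (g ν : ℕ) (hg : 2 ≤ g) (c : List ℕ)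
    (hpos : ∀ a ∈ c, 0 < a) (hsum : c.sum = ν) :
    ∀ k, k ≤ c.length → canonicalFlag (X g ν c) (Y g ν) k = W ν (s c k) := by
  intro k
  induction k with
  | zero =>
    intro _
    show canonicalFlag (X g ν c) (Y g ν) 0 = W ν 0
    rw [W_zero]
    rfl
  | succ k ih =>
    intro hk1
    have hk : k < c.length := hk1
    have ihe := ih (le_of_lt hk)
    have hsle : s c (k + 1) ≤ ν := by
      have := s_mono c hk1
      rw [s_length, hsum] at this
      exact this
    show sInf _ = W ν (s c (k + 1))
    apply le_antisymm
    · apply sInf_le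
      refine ⟨?_, ?_, ?_⟩
      · intro i
        rw [ihe]
        by_cases hi : (i : ℕ) = 1
        · have hx : X g ν c i = x2 ν c := if_pos hi
          rw [hx, Submodule.map_le_iff_le_comap]
          intro v hv
          exact x2_mem ν c (fun j _ h2 => nxt_ge c (le_of_lt hk) h2) hv
        · have hx : X g ν c i = 0 := if_neg hi
          rw [hx]
          rw [Submodule.map_zero]
          exact bot_le
      · intro i
        by_cases hi : (i : ℕ) = 1
        · have hx : X g ν c i = x2 ν c := if_pos hi
          rw [hx, Submodule.map_le_iff_le_comap]
          intro v hv
          refine x2_mem ν c (fun j hj h2 => ?_) hv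
          have h4 := nxt_ge c hk1 h2
          have h5 := s_mono c (show k + 1 ≤ k + 1 + 1 by omega)
          omega
        · have hx : X g ν c i = 0 := if_neg hi
          rw [hx, Submodule.map_zero]
          exact bot_le
      · intro i
        by_cases hi : (i : ℕ) = 0
        · have hy : Y g ν i = y1 ν := if_pos hi
          rw [hy, Submodule.map_le_iff_le_comap]
          intro v hv
          exact y1_mem ν hv
        · have hy : Y g ν i = 0 := if_neg hi
          rw [hy, Submodule.map_zero]
          exact bot_le
    · apply le_sInf
      rintro S ⟨h1, h2, h3⟩
      have hskν : s c k < ν := by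
        have := s_lt c hpos hk
        omega
      have key : ∀ t, ∀ j : Fin ν, (j : ℕ) = t → s c (k + 1) ≤ (j : ℕ) →
          Pi.single j (1:ℂ) ∈ S := by
        intro t
        induction t with
        | zero =>
          intro j hj hle
          exfalso
          have := s_lt c hpos hk
          omega
        | succ t iht =>
          intro j hj hle
          rcases eq_or_lt_of_le hle with heq | hlt
          · -- base: j = s c (k+1), image of e_{s c k} under x2
            have hmem : Pi.single (⟨s c k, hskν⟩ : Fin ν) (1:ℂ) ∈
                canonicalFlag (X g ν c) (Y g ν) k := by
              rw [ihe]
              exact single_mem_W ν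
                (show s c k ≤ ((⟨s c k, hskν⟩ : Fin ν) : ℕ) from le_refl _) 1
            have hx2e : x2 ν c (Pi.single (⟨s c k, hskν⟩ : Fin ν) (1:ℂ))
                = Pi.single j 1 := by
              funext i
              rw [x2_single]
              rw [Pi.single_apply]
              have hn : nxt c ((⟨s c k, hskν⟩ : Fin ν) : ℕ) = s c (k + 1) :=
                nxt_eq c hk (le_refl _) (s_lt c hpos hk)
              rw [hn]
              by_cases hij : (i : ℕ) = s c (k + 1)
              · rw [if_pos hij, if_pos (Fin.ext (by omega))]
              · rw [if_neg hij, if_neg (by intro e; subst e; omega)]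
            have hX : X g ν c (⟨1, by omega⟩ : Fin g) = x2 ν c := if_pos rfl
            have := h1 ⟨1, by omega⟩
            rw [hX] at this
            apply this
            rw [← hx2e]
            exact Submodule.mem_map_of_mem hmem
          · -- step: j = t+1 with s c (k+1) ≤ t, shift of e_t
            have htν : t < ν := by omega
            have hjs : Pi.single j (1:ℂ) = y1 ν (Pi.single (⟨t, by omega⟩ : Fin ν) 1) := by
              rw [y1_single ν (show t + 1 < ν by omega),
                show (⟨t + 1, by omega⟩ : Fin ν) = j from
                  Fin.ext (show t + 1 = (j : ℕ) by omega)]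
            have hprev : Pi.single (⟨t, by omega⟩ : Fin ν) (1:ℂ) ∈ S :=
              iht ⟨t, by omega⟩ rfl (show s c (k + 1) ≤ t by omega)
            have hY : Y g ν (⟨0, by omega⟩ : Fin g) = y1 ν := if_pos rfl
            have := h3 ⟨0, by omega⟩
            rw [hY] at this
            apply this
            rw [hjs]
            exact Submodule.mem_map_of_mem hprev
      intro v hv
      have hv' : v = ∑ j : Fin ν, Pi.single j (v j) := (Finset.univ_sum_single v).symm
      rw [hv']
      apply Submodule.sum_mem
      intro j _
      by_cases hj : s c (k + 1) ≤ (j : ℕ)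
      · have he : Pi.single j (v j) = v j • (Pi.single j 1 : Fin ν → ℂ) := by
          rw [← Pi.single_smul, smul_eq_mul, mul_one]
        rw [he]
        exact Submodule.smul_mem _ _ (key (j : ℕ) j rfl hj)
      · rw [hv j (by omega), Pi.single_zero]
        exact Submodule.zero_mem _

end CyclicAux

/-- for every composition `c` of `ν` there is a point of the seminilpotent
variety (for the quiver with one vertex and `g ≥ 2` loops) whose canonical flag has
dimension vector `c` and whose component `y₁` admits a cyclic vector. -/
theorem exists_point_with_flag_and_cyclic_y1
    (g ν : ℕ) (hg : 2 ≤ g) (hν : 1 ≤ ν) (c : List ℕ)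
    (hpos : ∀ a ∈ c, 0 < a) (hsum : c.sum = ν) :
    ∃ x y : Fin g → Module.End ℂ (Fin ν → ℂ),
      -- (a) the moment map condition Σ [xᵢ, yᵢ] = 0
      (∑ i, (x i * y i - y i * x i) = 0) ∧
      -- (b) the canonical flag has dimension vector c
      canonicalFlag x y c.length = ⊥ ∧
      (∀ k : Fin c.length,
        Module.finrank ℂ
          (↥(canonicalFlag x y (k : ℕ)) ⧸
            (canonicalFlag x y ((k : ℕ) + 1)).comap (canonicalFlag x y (k : ℕ)).subtype)
          = c.get k) ∧
      -- (c) y₁ admits a cyclic vector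
      (∃ v : Fin ν → ℂ,
        Submodule.span ℂ (Set.range fun k : ℕ => ((y ⟨0, by omega⟩) ^ k) v) = ⊤) := by
  refine ⟨CyclicAux.X g ν c, CyclicAux.Y g ν, ?_, ?_, ?_, ?_⟩
  · -- moment map
    apply Finset.sum_eq_zero
    intro i _
    by_cases hi : (i : ℕ) = 1
    · have hy : CyclicAux.Y g ν i = 0 := if_neg (by omega)
      rw [hy, mul_zero, zero_mul, sub_zero]
    · have hx : CyclicAux.X g ν c i = 0 := if_neg hi
      rw [hx, mul_zero, zero_mul, sub_zero]
  · -- flag reaches ⊥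
    rw [CyclicAux.flag_eq g ν hg c hpos hsum c.length (le_refl _)]
    rw [CyclicAux.s_length, hsum, CyclicAux.W_nu]
  · -- dimensions
    intro k
    have e1 := CyclicAux.flag_eq g ν hg c hpos hsum (k : ℕ) (le_of_lt k.isLt)
    have e2 := CyclicAux.flag_eq g ν hg c hpos hsum ((k : ℕ) + 1) k.isLt
    rw [e1, e2]
    have hsucc : CyclicAux.s c ((k : ℕ) + 1) = CyclicAux.s c (k : ℕ) + c.get k :=
      CyclicAux.s_succ c k.isLt
    have hsle : CyclicAux.s c ((k : ℕ) + 1) ≤ ν := by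
      have := CyclicAux.s_mono c (show (k : ℕ) + 1 ≤ c.length from k.isLt)
      rw [CyclicAux.s_length, hsum] at this
      exact this
    have hle : CyclicAux.W ν (CyclicAux.s c ((k : ℕ) + 1)) ≤
        CyclicAux.W ν (CyclicAux.s c (k : ℕ)) :=
      CyclicAux.W_anti ν (CyclicAux.s_mono c (Nat.le_succ _))
    have hq := Submodule.finrank_quotient_add_finrank
      ((CyclicAux.W ν (CyclicAux.s c ((k : ℕ) + 1))).comap
        (CyclicAux.W ν (CyclicAux.s c (k : ℕ))).subtype)
    have hcomap : Module.finrank ℂ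
        ((CyclicAux.W ν (CyclicAux.s c ((k : ℕ) + 1))).comap
          (CyclicAux.W ν (CyclicAux.s c (k : ℕ))).subtype)
        = ν - CyclicAux.s c ((k : ℕ) + 1) := by
      rw [LinearEquiv.finrank_eq (Submodule.comapSubtypeEquivOfLe hle)]
      exact CyclicAux.finrank_W ν _ hsle
    have hWk : Module.finrank ℂ (CyclicAux.W ν (CyclicAux.s c (k : ℕ))) =
        ν - CyclicAux.s c (k : ℕ) :=
      CyclicAux.finrank_W ν _ (by omega)
    rw [hcomap, hWk] at hq
    omega
  · -- cyclic vector
    refine ⟨Pi.single (⟨0, by omega⟩ : Fin ν) 1, ?_⟩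
    have hy : CyclicAux.Y g ν (⟨0, by omega⟩ : Fin g) = CyclicAux.y1 ν := if_pos rfl
    rw [hy]
    rw [eq_top_iff, ← (Pi.basisFun ℂ (Fin ν)).span_eq, Submodule.span_le]
    rintro _ ⟨j, rfl⟩
    apply Submodule.subset_span
    refine ⟨(j : ℕ), ?_⟩
    show ((CyclicAux.y1 ν) ^ ((j : ℕ))) (Pi.single (⟨0, by omega⟩ : Fin ν) 1)
      = Pi.basisFun ℂ (Fin ν) j
    rw [CyclicAux.y1_pow ν (by omega) (j : ℕ) j.isLt, Pi.basisFun_apply,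
      show (⟨(j : ℕ), j.isLt⟩ : Fin ν) = j from Fin.ext rfl]
end

section
/- Let (I, Ω) be a quiver with doubled arrow set H, and let (V_i), (V′_i), (W_i), (W′_i) be finite-dimensional complex vector spaces indexed by I. Let X = (X_h)_{h∈H} be a representation of the doubled quiver on the spaces (V_i ⊕ V′_i) whose block decomposition is X_h(v, v′) = (x_h v + η_h v′, x′_h v′), where x is a representation on (V_i), x′ a representation on (V′_i), and η_h ∈ Hom(V′_{s(h)}, V_{t(h)}). Let F_i : V_i ⊕ V′_i → W_i ⊕ W′_i be given by F_i(v, v′) = (f_i v + θ_i v′, f′_i v′) with f_i : V_i → W_i, θ_i : V′_i → W_i, f′_i : V′_i → W′_i. Assume (x′, f′) is stable, i.e. the only family of subspaces S_i ⊆ ker f′_i with x′_h(S_{s(h)}) ⊆ S_{t(h)} for all h ∈ H is zero. Then every family of subspaces Y_i ⊆ V_i ⊕ V′_i satisfying X_h(Y_{s(h)}) ⊆ Y_{t(h)} for all h ∈ H and F_i(Y_i) ⊆ W_i × {0} for all i is contained in (V_i)_{i∈I}, i.e. Y_i ⊆ V_i ⊕ {0} for all i. In particular V = ⊕(V_i ⊕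 {0}) is the largest X-invariant I-graded subspace of F^{−1}(W). -/
/-- with `X_h(v,v′) = (x_h v + η_h v′, x′_h v′)` and
`F_i(v,v′) = (f_i v + θ_i v′, f′_i v′)`, if `(x′, f′)` is stable, then every
`X`-invariant family `(Y_i)` with `F_i(Y_i) ⊆ W_i × 0` satisfies `Y_i ⊆ V_i ⊕ 0`;
and `(V_i ⊕ 0)_i` itself is such a family, hence is the largest `X`-invariant
`I`-graded subspace of `F⁻¹(W)`. -/
theorem largest_invariant_subspace
    (I Ω : Type) (s t : Ω → I)
    (V V' W W' : I → Type)
    [∀ j, AddCommGroup (V j)] [∀ j, Module ℂ (V j)] [∀ j, FiniteDimensional ℂ (V j)]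
    [∀ j, AddCommGroup (V' j)] [∀ j, Module ℂ (V' j)] [∀ j, FiniteDimensional ℂ (V' j)]
    [∀ j, AddCommGroup (W j)] [∀ j, Module ℂ (W j)] [∀ j, FiniteDimensional ℂ (W j)]
    [∀ j, AddCommGroup (W' j)] [∀ j, Module ℂ (W' j)] [∀ j, FiniteDimensional ℂ (W' j)]
    (x : ∀ h : DblH Ω, V (dblSrc s t h) →ₗ[ℂ] V (dblTgt s t h))
    (x' : ∀ h : DblH Ω, V' (dblSrc s t h) →ₗ[ℂ] V' (dblTgt s t h))
    (η : ∀ h : DblH Ω, V' (dblSrc s t h) →ₗ[ℂ] V (dblTgt s t h))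
    (f : ∀ i, V i →ₗ[ℂ] W i) (θ : ∀ i, V' i →ₗ[ℂ] W i) (f' : ∀ i, V' i →ₗ[ℂ] W' i)
    (hstable : ∀ S : ∀ i, Submodule ℂ (V' i),
      (∀ i, S i ≤ LinearMap.ker (f' i)) →
      (∀ h : DblH Ω, ∀ v ∈ S (dblSrc s t h), x' h v ∈ S (dblTgt s t h)) →
      ∀ i, S i = ⊥) :
    -- every X-invariant graded family inside F⁻¹(W × 0) is contained in (V_i ⊕ 0)
    (∀ Y : ∀ i, Submodule ℂ (V i × V' i),
      (∀ h : DblH Ω, ∀ p ∈ Y (dblSrc s t h),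
        ((x h p.1 + η h p.2, x' h p.2) : V (dblTgt s t h) × V' (dblTgt s t h))
          ∈ Y (dblTgt s t h)) →
      (∀ i, ∀ p ∈ Y i,
        ((f i p.1 + θ i p.2, f' i p.2) : W i × W' i)
          ∈ (⊤ : Submodule ℂ (W i)).prod (⊥ : Submodule ℂ (W' i))) →
      ∀ i, Y i ≤ (⊤ : Submodule ℂ (V i)).prod (⊥ : Submodule ℂ (V' i))) ∧
    -- and (V_i ⊕ 0) itself is X-invariant and mapped by F into W × 0
    (∀ h : DblH Ω, ∀ p ∈ (⊤ : Submodule ℂ (V (dblSrc s t h))).prod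
        (⊥ : Submodule ℂ (V' (dblSrc s t h))),
      ((x h p.1 + η h p.2, x' h p.2) : V (dblTgt s t h) × V' (dblTgt s t h))
        ∈ (⊤ : Submodule ℂ (V (dblTgt s t h))).prod (⊥ : Submodule ℂ (V' (dblTgt s t h)))) ∧
    (∀ i, ∀ p ∈ (⊤ : Submodule ℂ (V i)).prod (⊥ : Submodule ℂ (V' i)),
      ((f i p.1 + θ i p.2, f' i p.2) : W i × W' i)
        ∈ (⊤ : Submodule ℂ (W i)).prod (⊥ : Submodule ℂ (W' i))) := by
  refine ⟨?_, ?_, ?_⟩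
  · intro Y hinv hF i
    have hS : ∀ j, Submodule.map (LinearMap.snd ℂ (V j) (V' j)) (Y j) = ⊥ := by
      apply hstable
      · intro j
        rintro v ⟨p, hp, rfl⟩
        have := (hF j p hp).2
        simpa using this
      · intro h v hv
        obtain ⟨p, hp, rfl⟩ := hv
        exact ⟨_, hinv h p hp, rfl⟩
    intro p hp
    have : p.2 ∈ (⊥ : Submodule ℂ (V' i)) := hS i ▸ ⟨p, hp, rfl⟩
    exact ⟨trivial, this⟩
  · rintro h ⟨v, v'⟩ ⟨-, hv'⟩
    simp only [Submodule.mem_bot] at hv'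
    subst hv'
    simp [Submodule.mem_prod]
  · rintro i ⟨v, v'⟩ ⟨-, hv'⟩
    simp only [Submodule.mem_bot] at hv'
    subst hv'
    simp [Submodule.mem_prod]
end

section
/- Let (I, Ω) be a quiver with doubled arrow set H, (V_i) and (W_i) finite-dimensional complex vector spaces indexed by I, x = (x_h)_{h∈H} a representation of the doubled quiver on (V_i), f_i : V_i → W_i and g_i : W_i → V_i linear maps. Assume (x, f) is stable, i.e. the only family of subspaces S_i ⊆ ker f_i with x_h(S_{s(h)}) ⊆ S_{t(h)} for all h ∈ H is zero. If γ = (γ_i)_{i∈I} with γ_i ∈ GL(V_i) fixes (x, f, g), i.e. γ_{t(h)} ∘ x_h = x_h ∘ γ_{s(h)} for all h ∈ H, f_i ∘ γ_i = f_i and γ_i ∘ g_i = g_i for all i ∈ I, then γ_i = id_{V_i} for all i. (The action of G_ν = ∏_i GL(V_i) on the stable locus is free.) -/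
/-- the action of `∏ᵢ GL(Vᵢ)` on stable points `(x, f, g)` is free: if
`(x, f)` is stable and `γ = (γᵢ)` fixes `(x, f, g)`, then `γ` is the identity. -/
theorem stabilizer_trivial_of_stable
    (I Ω : Type) (s t : Ω → I)
    (V W : I → Type)
    [∀ j, AddCommGroup (V j)] [∀ j, Module ℂ (V j)] [∀ j, FiniteDimensional ℂ (V j)]
    [∀ j, AddCommGroup (W j)] [∀ j, Module ℂ (W j)] [∀ j, FiniteDimensional ℂ (W j)]
    (x : ∀ h : DblH Ω, V (dblSrc s t h) →ₗ[ℂ] V (dblTgt s t h))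
    (f : ∀ i, V i →ₗ[ℂ] W i) (g : ∀ i, W i →ₗ[ℂ] V i)
    (hstable : ∀ S : ∀ i, Submodule ℂ (V i),
      (∀ i, S i ≤ LinearMap.ker (f i)) →
      (∀ h : DblH Ω, ∀ v ∈ S (dblSrc s t h), x h v ∈ S (dblTgt s t h)) →
      ∀ i, S i = ⊥)
    (γ : ∀ i, V i ≃ₗ[ℂ] V i)
    (hx : ∀ h : DblH Ω, ∀ v : V (dblSrc s t h),
      γ (dblTgt s t h) (x h v) = x h (γ (dblSrc s t h) v))
    (hf : ∀ i, ∀ v : V i, f i (γ i v) = f i v)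
    (hg : ∀ i, ∀ w : W i, γ i (g i w) = g i w) :
    ∀ i, ∀ v : V i, γ i v = v := by
  set S : ∀ i, Submodule ℂ (V i) :=
    fun i => LinearMap.range (((γ i).toLinearMap) - LinearMap.id) with hS
  have hker : ∀ i, S i ≤ LinearMap.ker (f i) := by
    intro i v hv
    obtain ⟨u, rfl⟩ := hv
    simp [LinearMap.mem_ker, hf i u]
  have hinv : ∀ h : DblH Ω, ∀ v ∈ S (dblSrc s t h), x h v ∈ S (dblTgt s t h) := by
    intro h v hv
    obtain ⟨u, rfl⟩ := hv
    refine ⟨x h u, ?_⟩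
    simp [hx h u]
  have hbot := hstable S hker hinv
  intro i v
  have : ((γ i).toLinearMap - (LinearMap.id : V i →ₗ[ℂ] V i)) v ∈ S i := ⟨v, rfl⟩
  rw [hbot i] at this
  have := Submodule.mem_bot ℂ |>.mp this
  simpa [sub_eq_zero] using this
end
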